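/- arXiv:0811.4027 — 2 statements merged into one kernel-verified Lean document; each statement's English description precedes it below -/
import Mathlib

section
/- Let w be a weight with BOPS (φ_n, φ̄_n) and let α* ∈ ℂ∖{0} be such that φ*_n(α*) ≠ 0 for all n ≥ 0. Let (Φ_n, Φ̄_n) be a BOPS for the modified weight ζ ↦ (1−α* ζ^(−1))·w(ζ), with leading coefficients κ⁺_n and coefficients r⁺_n := Φ_n(0)/κ⁺_n, r̄⁺_n := Φ̄_n(0)/κ⁺_n. Then for all n ≥ 0: (κ⁺_n)² = κ_(n+1) κ_n φ*_n(α*)/φ*_(n+1)(α*); r⁺_n = φ_n(α*)/φ*_n(α*); and r̄⁺_n = (φ̄_n(0) φ*_(n+1)(α*) − φ̄_(n+1)(0) α* φ*_n(α*))/(κ_(n+1) φ*_n(α*)). -/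
open Polynomial Matrix Filter

noncomputable section

/-- `(1/(2πi)) ∮_𝕋 f(ζ) dζ/ζ`, written as `(1/(2π)) ∫_0^{2π} f(e^{iθ}) dθ`. -/
def circleAvg (f : ℂ → ℂ) : ℂ :=
  (2 * Real.pi : ℂ)⁻¹ * ∫ θ in (0:ℝ)..(2 * Real.pi), f (Complex.exp (θ * Complex.I))

/-- Fourier coefficient `w_k` of a weight `w` on the unit circle. -/
def fCoeff (w : ℂ → ℂ) (k : ℤ) : ℂ := circleAvg fun ζ => w ζ * ζ ^ (-k)

/-- Toeplitz determinant `I_n[w] = det (w_{j-k})_{j,k=0..n-1}`. -/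
def toeplitzDet (w : ℂ → ℂ) (n : ℕ) : ℂ :=
  (Matrix.of fun j k : Fin n => fCoeff w ((j : ℤ) - (k : ℤ))).det

/-- The Carathéodory function `F(z)`. -/
def cara (w : ℂ → ℂ) (z : ℂ) : ℂ := circleAvg fun ζ => (ζ + z) / (ζ - z) * w ζ

/-- A bi-orthogonal polynomial system (BOPS) on the unit circle for the weight `w`:
polynomials `φ_n`, `φ̄_n` of exact degree `n` with common leading coefficient `κ_n ≠ 0`,
bi-orthonormal with respect to `w`. -/
structure BOPS (w : ℂ → ℂ) where
  φ : ℕ → Polynomial ℂ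
  φb : ℕ → Polynomial ℂ
  κ : ℕ → ℂ
  κ_ne : ∀ n, κ n ≠ 0
  degφ : ∀ n, (φ n).degree ≤ n
  degφb : ∀ n, (φb n).degree ≤ n
  leadφ : ∀ n, (φ n).coeff n = κ n
  leadφb : ∀ n, (φb n).coeff n = κ n
  orth : ∀ m n, circleAvg (fun ζ => w ζ * (φ m).eval ζ * (φb n).eval ζ⁻¹)
      = if m = n then 1 else 0

namespace BOPS

variable {w : ℂ → ℂ}

/-- The reciprocal polynomial `φ*_n(z) = z^n φ̄_n(1/z)`. -/
def φs (S : BOPS w) (n : ℕ) : Polynomial ℂ := (S.φb n).reflect n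

/-- `r_n = φ_n(0)/κ_n`. -/
def r (S : BOPS w) (n : ℕ) : ℂ := (S.φ n).eval 0 / S.κ n

/-- `r̄_n = φ̄_n(0)/κ_n`. -/
def rb (S : BOPS w) (n : ℕ) : ℂ := (S.φb n).eval 0 / S.κ n

/-- Associated function `ξ_n`. -/
def ξ (S : BOPS w) : ℕ → ℂ → ℂ
  | 0, z => S.κ 0 * (fCoeff w 0 + cara w z)
  | n + 1, z => circleAvg fun ζ => (ζ + z) / (ζ - z) * w ζ * (S.φ (n + 1)).eval ζ

/-- Associated function `ξ*_n`. -/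
def ξs (S : BOPS w) : ℕ → ℂ → ℂ
  | 0, z => S.κ 0 * (fCoeff w 0 - cara w z)
  | n + 1, z =>
      -z ^ (n + 1) * circleAvg fun ζ => (ζ + z) / (ζ - z) * w ζ * (S.φb (n + 1)).eval ζ⁻¹

end BOPS

/-- A square matrix of size `K+1` built from a distinguished first row and `K` further rows. -/
def rowMat {K : ℕ} (top : Fin (K + 1) → ℂ) (rest : Fin K → Fin (K + 1) → ℂ) :
    Matrix (Fin (K + 1)) (Fin (K + 1)) ℂ :=
  Matrix.of fun i j => Fin.cases (top j) (fun r => rest r j) i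

end

noncomputable section
namespace Chr

noncomputable def e (θ : ℝ) : ℂ := Complex.exp (θ * Complex.I)

lemma e_ne (θ : ℝ) : e θ ≠ 0 := Complex.exp_ne_zero _

lemma cont_e : Continuous e := by
  unfold e; fun_prop

lemma circleAvg_congr {f g : ℂ → ℂ} (h : ∀ θ : ℝ, f (e θ) = g (e θ)) :
    circleAvg f = circleAvg g := by
  unfold circleAvg
  congr 1
  exact intervalIntegral.integral_congr fun θ _ => h θ

lemma circleAvg_add {f g : ℂ → ℂ}
    (hf : IntervalIntegrable (fun θ : ℝ => f (e θ)) MeasureTheory.volume 0 (2 * Real.pi))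
    (hg : IntervalIntegrable (fun θ : ℝ => g (e θ)) MeasureTheory.volume 0 (2 * Real.pi)) :
    circleAvg (fun ζ => f ζ + g ζ) = circleAvg f + circleAvg g := by
  unfold circleAvg
  rw [show (∫ θ in (0:ℝ)..(2*Real.pi), (f (Complex.exp (θ * Complex.I)) + g (Complex.exp (θ * Complex.I))))
      = (∫ θ in (0:ℝ)..(2*Real.pi), f (Complex.exp (θ * Complex.I)))
        + ∫ θ in (0:ℝ)..(2*Real.pi), g (Complex.exp (θ * Complex.I)) from
    intervalIntegral.integral_add hf hg, mul_add]

lemma circleAvg_const_mul (c : ℂ) (f : ℂ → ℂ) :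
    circleAvg (fun ζ => c * f ζ) = c * circleAvg f := by
  unfold circleAvg
  rw [intervalIntegral.integral_const_mul]; ring

lemma circleAvg_zero : circleAvg (fun _ => (0:ℂ)) = 0 := by
  unfold circleAvg; simp

/-- The pairing `⟨p,q⟩_v`. -/
noncomputable def P (v : ℂ → ℂ) (p q : ℂ[X]) : ℂ :=
  circleAvg fun ζ => v ζ * p.eval ζ * q.eval ζ⁻¹

variable {v : ℂ → ℂ}

lemma integrable (hv : Continuous fun θ => v (e θ)) (p q : ℂ[X]) :
    IntervalIntegrable (fun θ : ℝ => v (e θ) * p.eval (e θ) * q.eval (e θ)⁻¹)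
      MeasureTheory.volume 0 (2 * Real.pi) :=
  ((hv.mul ((p.continuous).comp cont_e)).mul
    ((q.continuous).comp (cont_e.inv₀ e_ne))).intervalIntegrable _ _

lemma P_add_left (hv : Continuous fun θ => v (e θ)) (p₁ p₂ q : ℂ[X]) :
    P v (p₁ + p₂) q = P v p₁ q + P v p₂ q := by
  unfold P
  rw [← circleAvg_add (f := fun ζ => v ζ * p₁.eval ζ * q.eval ζ⁻¹) (g := fun ζ => v ζ * p₂.eval ζ * q.eval ζ⁻¹) (integrable hv p₁ q) (integrable hv p₂ q)]
  exact circleAvg_congr fun θ => by simp [eval_add]; ring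

lemma P_add_right (hv : Continuous fun θ => v (e θ)) (p q₁ q₂ : ℂ[X]) :
    P v p (q₁ + q₂) = P v p q₁ + P v p q₂ := by
  unfold P
  rw [← circleAvg_add (f := fun ζ => v ζ * p.eval ζ * q₁.eval ζ⁻¹) (g := fun ζ => v ζ * p.eval ζ * q₂.eval ζ⁻¹) (integrable hv p q₁) (integrable hv p q₂)]
  exact circleAvg_congr fun θ => by simp [eval_add]; ring

lemma P_Cmul_left (c : ℂ) (p q : ℂ[X]) : P v (C c * p) q = c * P v p q := by
  unfold P
  rw [← circleAvg_const_mul]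
  exact circleAvg_congr fun θ => by simp; ring

lemma P_Cmul_right (c : ℂ) (p q : ℂ[X]) : P v p (C c * q) = c * P v p q := by
  unfold P
  rw [← circleAvg_const_mul]
  exact circleAvg_congr fun θ => by simp; ring

lemma P_zero_left (q : ℂ[X]) : P v 0 q = 0 := by
  unfold P
  rw [← circleAvg_zero]
  exact circleAvg_congr fun θ => by simp

lemma P_sum_left (hv : Continuous fun θ => v (e θ)) (s : Finset ℕ) (c : ℕ → ℂ)
    (p : ℕ → ℂ[X]) (q : ℂ[X]) :
    P v (∑ k ∈ s, C (c k) * p k) q = ∑ k ∈ s, c k * P v (p k) q := by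
  classical
  induction s using Finset.induction with
  | empty => simpa using P_zero_left q
  | insert _ _ hk ih =>
      rw [Finset.sum_insert hk, Finset.sum_insert hk, P_add_left hv, P_Cmul_left, ih]

lemma P_sum_right (hv : Continuous fun θ => v (e θ)) (s : Finset ℕ) (c : ℕ → ℂ)
    (p : ℂ[X]) (q : ℕ → ℂ[X]) :
    P v p (∑ k ∈ s, C (c k) * q k) = ∑ k ∈ s, c k * P v p (q k) := by
  classical
  induction s using Finset.induction with
  | empty =>
      simp only [Finset.sum_empty]
      unfold P
      rw [← circleAvg_zero]
      exact circleAvg_congr fun θ => by simp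
  | insert _ _ hk ih =>
      rw [Finset.sum_insert hk, Finset.sum_insert hk, P_add_right hv, P_Cmul_right, ih]

lemma eval_reflect (p : ℂ[X]) (N : ℕ) (hp : p.degree ≤ N) (z : ℂ) (hz : z ≠ 0) :
    (p.reflect N).eval z = z ^ N * p.eval z⁻¹ := by
  have hnd : p.natDegree ≤ N := natDegree_le_iff_degree_le.2 hp
  have hrd : (p.reflect N).natDegree ≤ N := by
    apply natDegree_le_iff_degree_le.2
    apply (degree_le_iff_coeff_zero _ _).2
    intro m hm
    have hm' : N < m := by exact_mod_cast hm
    rw [coeff_reflect]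
    rw [revAt_eq_self_of_lt hm']
    exact coeff_eq_zero_of_degree_lt (lt_of_le_of_lt hp (by exact_mod_cast hm'))
  rw [eval_eq_sum_range' (Nat.lt_succ_of_le hrd), eval_eq_sum_range' (Nat.lt_succ_of_le hnd),
    Finset.mul_sum]
  rw [← Finset.sum_range_reflect]
  apply Finset.sum_congr rfl
  intro i hi
  have hi' : i ≤ N := Nat.lt_succ_iff.1 (Finset.mem_range.1 hi)
  rw [coeff_reflect]
  have : revAt N (N + 1 - 1 - i) = i := by
    rw [Nat.add_sub_cancel]
    rw [revAt_le (Nat.sub_le _ _)]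
    omega
  rw [this]
  have hz1 : z ^ (N + 1 - 1 - i) = z ^ N * (z⁻¹) ^ i := by
    rw [Nat.add_sub_cancel]
    rw [inv_pow, pow_sub₀ _ hz hi']
  rw [hz1]; ring


lemma e_mem_sphere (θ : ℝ) : e θ ∈ Metric.sphere (0:ℂ) 1 := by
  rw [mem_sphere_zero_iff_norm, e, Complex.norm_exp_ofReal_mul_I]

lemma P_C_left (q : ℂ[X]) (c : ℂ) : P v (C c) q = c * P v 1 q := by
  rw [show (C c : ℂ[X]) = C c * 1 by ring, P_Cmul_left]


lemma exists_expand (ψ : ℕ → ℂ[X]) (κ : ℕ → ℂ) (hκ : ∀ k, κ k ≠ 0)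
    (hd : ∀ k, (ψ k).degree ≤ k) (hl : ∀ k, (ψ k).coeff k = κ k) :
    ∀ (N : ℕ) (p : ℂ[X]), p.degree ≤ N →
      ∃ c : ℕ → ℂ, p = ∑ k ∈ Finset.range (N + 1), C (c k) * ψ k := by
  intro N
  induction N with
  | zero =>
      intro p hp
      refine ⟨fun _ => p.coeff 0 / κ 0, ?_⟩
      have hψ0 : ψ 0 = C (κ 0) := by
        rw [← hl 0]; exact eq_C_of_degree_le_zero (by exact_mod_cast hd 0)
      rw [Finset.sum_range_one, hψ0, ← C_mul, div_mul_cancel₀ _ (hκ 0)]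
      exact eq_C_of_degree_le_zero (by exact_mod_cast hp)
  | succ N ih =>
      intro p hp
      set d : ℂ := p.coeff (N + 1) / κ (N + 1) with hd'
      have hdeg : (p - C d * ψ (N + 1)).degree ≤ N := by
        apply (degree_le_iff_coeff_zero _ _).2
        intro m hm
        have hm' : N < m := by exact_mod_cast hm
        rw [coeff_sub, coeff_C_mul]
        rcases Nat.lt_or_ge (N + 1) m with h | h
        · rw [coeff_eq_zero_of_degree_lt (lt_of_le_of_lt hp (by exact_mod_cast h)),
            coeff_eq_zero_of_degree_lt (lt_of_le_of_lt (hd (N + 1)) (by exact_mod_cast h))]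
          ring
        · have hm2 : m = N + 1 := by omega
          subst hm2
          rw [hl (N + 1), hd', div_mul_cancel₀ _ (hκ (N + 1)), sub_self]
      obtain ⟨c, hc⟩ := ih (p - C d * ψ (N + 1)) hdeg
      refine ⟨fun k => if k = N + 1 then d else c k, ?_⟩
      rw [Finset.sum_range_succ]
      simp only [if_pos rfl]
      have : ∑ k ∈ Finset.range (N + 1), C (if k = N + 1 then d else c k) * ψ k
          = ∑ k ∈ Finset.range (N + 1), C (c k) * ψ k := by
        apply Finset.sum_congr rfl
        intro k hk
        rw [if_neg (by have := Finset.mem_range.1 hk; omega)]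
      rw [this, ← hc]
      simp


lemma orthP (U : BOPS v) (m k : ℕ) : P v (U.φ m) (U.φb k) = if m = k then 1 else 0 :=
  U.orth m k

lemma pair_φb (hv : Continuous fun θ : ℝ => v (Complex.exp (θ * Complex.I)))
    (U : BOPS v) {p : ℂ[X]} {m : ℕ} (hp : p.degree ≤ m) :
    P v p (U.φb m) = p.coeff m / U.κ m := by
  obtain ⟨c, hc⟩ := exists_expand U.φ U.κ U.κ_ne U.degφ U.leadφ m p hp
  have h1 : P v p (U.φb m) = c m := by
    rw [hc, P_sum_left hv]
    rw [Finset.sum_eq_single m (fun k _ hk => by rw [orthP, if_neg hk, mul_zero])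
      (fun h => absurd (Finset.self_mem_range_succ m) h)]
    rw [orthP, if_pos rfl, mul_one]
  have h2 : p.coeff m = c m * U.κ m := by
    rw [hc, finset_sum_coeff]
    rw [Finset.sum_eq_single m (fun k hk hkm => by
        rw [coeff_C_mul, coeff_eq_zero_of_degree_lt (lt_of_le_of_lt (U.degφ k)
          (by exact_mod_cast lt_of_le_of_ne (Nat.lt_succ_iff.1 (Finset.mem_range.1 hk)) hkm)),
          mul_zero])
      (fun h => absurd (Finset.self_mem_range_succ m) h)]
    rw [coeff_C_mul, U.leadφ]
  rw [h1, h2, mul_div_assoc, div_self (U.κ_ne m), mul_one]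

lemma pair_φ (hv : Continuous fun θ : ℝ => v (Complex.exp (θ * Complex.I)))
    (U : BOPS v) {q : ℂ[X]} {m : ℕ} (hq : q.degree ≤ m) :
    P v (U.φ m) q = q.coeff m / U.κ m := by
  obtain ⟨c, hc⟩ := exists_expand U.φb U.κ U.κ_ne U.degφb U.leadφb m q hq
  have h1 : P v (U.φ m) q = c m := by
    rw [hc, P_sum_right hv]
    rw [Finset.sum_eq_single m (fun k _ hk => by rw [orthP, if_neg (Ne.symm hk), mul_zero])
      (fun h => absurd (Finset.self_mem_range_succ m) h)]
    rw [orthP, if_pos rfl, mul_one]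
  have h2 : q.coeff m = c m * U.κ m := by
    rw [hc, finset_sum_coeff]
    rw [Finset.sum_eq_single m (fun k hk hkm => by
        rw [coeff_C_mul, coeff_eq_zero_of_degree_lt (lt_of_le_of_lt (U.degφb k)
          (by exact_mod_cast lt_of_le_of_ne (Nat.lt_succ_iff.1 (Finset.mem_range.1 hk)) hkm)),
          mul_zero])
      (fun h => absurd (Finset.self_mem_range_succ m) h)]
    rw [coeff_C_mul, U.leadφb]
  rw [h1, h2, mul_div_assoc, div_self (U.κ_ne m), mul_one]

lemma expand_φ (hv : Continuous fun θ : ℝ => v (Complex.exp (θ * Complex.I)))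
    (U : BOPS v) {p : ℂ[X]} {N : ℕ} (hp : p.degree ≤ N) :
    p = ∑ k ∈ Finset.range (N + 1), C (P v p (U.φb k)) * U.φ k := by
  obtain ⟨c, hc⟩ := exists_expand U.φ U.κ U.κ_ne U.degφ U.leadφ N p hp
  have : ∀ k ∈ Finset.range (N + 1), P v p (U.φb k) = c k := by
    intro k hk
    rw [hc, P_sum_left hv]
    rw [Finset.sum_eq_single k (fun j _ hj => by rw [orthP, if_neg hj, mul_zero])
      (fun h => absurd hk h)]
    rw [orthP, if_pos rfl, mul_one]
  calc p = ∑ k ∈ Finset.range (N + 1), C (c k) * U.φ k := hc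
    _ = ∑ k ∈ Finset.range (N + 1), C (P v p (U.φb k)) * U.φ k :=
      Finset.sum_congr rfl fun k hk => by rw [this k hk]

lemma expand_φb (hv : Continuous fun θ : ℝ => v (Complex.exp (θ * Complex.I)))
    (U : BOPS v) {q : ℂ[X]} {N : ℕ} (hq : q.degree ≤ N) :
    q = ∑ k ∈ Finset.range (N + 1), C (P v (U.φ k) q) * U.φb k := by
  obtain ⟨c, hc⟩ := exists_expand U.φb U.κ U.κ_ne U.degφb U.leadφb N q hq
  have : ∀ k ∈ Finset.range (N + 1), P v (U.φ k) q = c k := by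
    intro k hk
    rw [hc, P_sum_right hv]
    rw [Finset.sum_eq_single k (fun j _ hj => by rw [orthP, if_neg (Ne.symm hj), mul_zero])
      (fun h => absurd hk h)]
    rw [orthP, if_pos rfl, mul_one]
  calc q = ∑ k ∈ Finset.range (N + 1), C (c k) * U.φb k := hc
    _ = ∑ k ∈ Finset.range (N + 1), C (P v (U.φ k) q) * U.φb k :=
      Finset.sum_congr rfl fun k hk => by rw [this k hk]

lemma deg_φs (U : BOPS v) (n : ℕ) : (U.φs n).degree ≤ n := by
  apply (degree_le_iff_coeff_zero _ _).2
  intro m hm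
  have hm' : n < m := by exact_mod_cast hm
  rw [BOPS.φs, coeff_reflect, revAt_eq_self_of_lt hm']
  exact coeff_eq_zero_of_degree_lt (lt_of_le_of_lt (U.degφb n) (by exact_mod_cast hm'))

lemma φs_coeff_zero (U : BOPS v) (n : ℕ) : (U.φs n).coeff 0 = U.κ n := by
  rw [BOPS.φs, coeff_reflect, revAt_le (Nat.zero_le n), Nat.sub_zero, U.leadφb]

lemma φs_coeff_top (U : BOPS v) (n : ℕ) : (U.φs n).coeff n = (U.φb n).eval 0 := by
  rw [BOPS.φs, coeff_reflect, revAt_le (le_refl n), Nat.sub_self,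
    ← coeff_zero_eq_eval_zero]

lemma φs_eval_zero (U : BOPS v) (n : ℕ) : (U.φs n).eval 0 = U.κ n := by
  rw [← coeff_zero_eq_eval_zero, φs_coeff_zero]


lemma P_sub_left (hv : Continuous fun θ : ℝ => v (e θ)) (p₁ p₂ q : ℂ[X]) :
    P v (p₁ - p₂) q = P v p₁ q - P v p₂ q := by
  have : p₁ - p₂ = p₁ + C (-1) * p₂ := by
    rw [map_neg, C_1]; ring
  rw [this, P_add_left hv, P_Cmul_left]; ring

lemma P_C_right (p : ℂ[X]) (c : ℂ) : P v p (C c) = c * P v p 1 := by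
  rw [show (C c : ℂ[X]) = C c * 1 by ring, P_Cmul_right]

lemma P_cancelX (p q : ℂ[X]) : P v (X * p) (X * q) = P v p q := by
  unfold P
  refine circleAvg_congr fun θ => ?_
  simp only [eval_mul, eval_X]
  field_simp [e_ne θ]

lemma divX_deg_le {p : ℂ[X]} {j n : ℕ} (hp : p.degree ≤ j) (hj : j ≤ n) :
    p.divX.degree ≤ (n : WithBot ℕ) := by
  rcases eq_or_ne p 0 with h | h
  · simp [h]
  · exact le_of_lt (lt_of_lt_of_le (degree_divX_lt h) (le_trans hp (by exact_mod_cast hj)))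

lemma divX_coeff_hi {p : ℂ[X]} {j n : ℕ} (hp : p.degree ≤ j) (hj : j ≤ n) :
    p.divX.coeff n = 0 := by
  rw [coeff_divX]
  exact coeff_eq_zero_of_degree_lt (lt_of_le_of_lt hp (by exact_mod_cast Nat.lt_succ_of_le hj))

/-- `P v (X φ_n) φ̄_j = φ̄_j(0) ⬝ P v (X φ_n) 1` for `j ≤ n`. -/
lemma pair_Xφ (hv : Continuous fun θ : ℝ => v (e θ)) (U : BOPS v) {j n : ℕ} (hj : j ≤ n) :
    P v (X * U.φ n) (U.φb j) = (U.φb j).eval 0 * P v (X * U.φ n) 1 := by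
  have hsplit : U.φb j = X * (U.φb j).divX + C ((U.φb j).coeff 0) :=
    (X_mul_divX_add (U.φb j)).symm
  conv_lhs => rw [hsplit]
  rw [P_add_right hv, P_cancelX, P_C_right,
    pair_φ hv U (divX_deg_le (U.degφb j) hj), divX_coeff_hi (U.degφb j) hj,
    coeff_zero_eq_eval_zero, zero_div, zero_add]

/-- The Christoffel–Darboux-type identity at the origin. -/
lemma cd (hv : Continuous fun θ : ℝ => v (e θ)) (U : BOPS v) (n : ℕ) :
    ∑ j ∈ Finset.range (n + 1), C ((U.φb j).eval 0) * U.φ j = C (U.κ n) * U.φs n := by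
  have hdeg : (C (U.κ n) * U.φs n).degree ≤ n := by
    refine le_trans (degree_mul_le _ _) ?_
    calc (C (U.κ n)).degree + (U.φs n).degree ≤ 0 + (n : WithBot ℕ) :=
          add_le_add degree_C_le (deg_φs U n)
      _ = (n : WithBot ℕ) := zero_add _
  have key : ∀ k, k ≤ n → P v (C (U.κ n) * U.φs n) (U.φb k) = (U.φb k).eval 0 := by
    intro k hk
    rw [P_Cmul_left]
    have swap : P v (U.φs n) (U.φb k) = P v (X ^ (n - k) * U.φs k) (U.φb n) := by
      unfold P
      refine circleAvg_congr fun θ => ?_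
      simp only [BOPS.φs, eval_mul, eval_pow, eval_X,
        eval_reflect _ _ (U.degφb n) _ (e_ne θ), eval_reflect _ _ (U.degφb k) _ (e_ne θ)]
      have : (e θ) ^ n = (e θ) ^ (n - k) * (e θ) ^ k := by
        rw [← pow_add]; congr 1; omega
      rw [this]; ring
    have hdeg2 : (X ^ (n - k) * U.φs k : ℂ[X]).degree ≤ n := by
      refine le_trans (degree_mul_le _ _) ?_
      calc (X ^ (n-k) : ℂ[X]).degree + (U.φs k).degree ≤ ((n - k : ℕ) : WithBot ℕ) + (k : WithBot ℕ) :=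
            add_le_add (degree_X_pow_le _) (deg_φs U k)
        _ ≤ (n : WithBot ℕ) := by
            rw [← Nat.cast_add]
            exact_mod_cast (by omega : n - k + k ≤ n)
    have hcoef : (X ^ (n - k) * U.φs k : ℂ[X]).coeff n = (U.φb k).eval 0 := by
      have h1 := coeff_X_pow_mul (U.φs k) (n - k) k
      rw [show k + (n - k) = n from by omega] at h1
      rw [h1, φs_coeff_top]
    rw [swap, pair_φb hv U hdeg2, hcoef, mul_comm, div_mul_cancel₀ _ (U.κ_ne n)]
  calc ∑ j ∈ Finset.range (n + 1), C ((U.φb j).eval 0) * U.φ j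
      = ∑ j ∈ Finset.range (n + 1), C (P v (C (U.κ n) * U.φs n) (U.φb j)) * U.φ j := by
        refine Finset.sum_congr rfl fun j hj => ?_
        rw [key j (Nat.lt_succ_iff.1 (Finset.mem_range.1 hj))]
    _ = C (U.κ n) * U.φs n := (expand_φ hv U hdeg).symm

/-- Szegő-type recurrence. -/
lemma sr (hv : Continuous fun θ : ℝ => v (e θ)) (U : BOPS v) (n : ℕ) :
    U.φ (n + 1) = C (U.κ (n + 1) / U.κ n) * (X * U.φ n)
      + C ((U.φ (n + 1)).eval 0 / U.κ n) * U.φs n := by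
  set c : ℂ := U.κ (n + 1) / U.κ n with hc
  set K : ℂ[X] := U.φ (n + 1) - C c * (X * U.φ n) with hK
  have hKdeg : K.degree ≤ n := by
    apply (degree_le_iff_coeff_zero _ _).2
    intro m hm
    have hm' : n < m := by exact_mod_cast hm
    obtain ⟨d, rfl⟩ : ∃ d, m = d + 1 := ⟨m - 1, by omega⟩
    rw [hK, coeff_sub, coeff_C_mul, coeff_X_mul]
    rcases Nat.lt_or_ge (n + 1) (d + 1) with h | h
    · rw [coeff_eq_zero_of_degree_lt (lt_of_le_of_lt (U.degφ (n+1)) (by exact_mod_cast h)),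
        coeff_eq_zero_of_degree_lt (lt_of_le_of_lt (U.degφ n) (by exact_mod_cast (by omega : n < d))),
        mul_zero, sub_zero]
    · have : d = n := by omega
      rw [this]
      rw [U.leadφ, U.leadφ, hc, div_mul_cancel₀ _ (U.κ_ne n), sub_self]
  set γ : ℂ := P v (X * U.φ n) 1 with hγ
  have hKj : ∀ j, j ≤ n → P v K (U.φb j) = (-c * γ) * (U.φb j).eval 0 := by
    intro j hj
    have h0 : P v (U.φ (n + 1)) (U.φb j) = 0 := by
      have hne : n + 1 ≠ j := by omega
      rw [orthP]
      exact if_neg hne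
    rw [hK, P_sub_left hv, h0, P_Cmul_left, pair_Xφ hv U hj]
    ring
  have hKexp : K = C (-c * γ * U.κ n) * U.φs n := by
    calc K = ∑ j ∈ Finset.range (n + 1), C (P v K (U.φb j)) * U.φ j := expand_φ hv U hKdeg
      _ = ∑ j ∈ Finset.range (n + 1), C (-c * γ) * (C ((U.φb j).eval 0) * U.φ j) := by
          refine Finset.sum_congr rfl fun j hj => ?_
          rw [hKj j (Nat.lt_succ_iff.1 (Finset.mem_range.1 hj)), C_mul, mul_assoc]
      _ = C (-c * γ) * ∑ j ∈ Finset.range (n + 1), C ((U.φb j).eval 0) * U.φ j := by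
          rw [Finset.mul_sum]
      _ = C (-c * γ) * (C (U.κ n) * U.φs n) := by rw [cd hv U n]
      _ = C (-c * γ * U.κ n) * U.φs n := by rw [← mul_assoc, ← C_mul]
  have hK0 : K.eval 0 = (U.φ (n + 1)).eval 0 := by
    rw [hK]; simp
  have hμ : -c * γ * U.κ n = (U.φ (n + 1)).eval 0 / U.κ n := by
    have := congrArg (Polynomial.eval 0) hKexp
    rw [hK0, eval_mul, eval_C, φs_eval_zero] at this
    rw [this]
    field_simp [U.κ_ne n]
  calc U.φ (n + 1) = C c * (X * U.φ n) + K := by rw [hK]; ring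
    _ = C c * (X * U.φ n) + C ((U.φ (n + 1)).eval 0 / U.κ n) * U.φs n := by
        rw [hKexp, hμ]

lemma deg_linear_mul {p : ℂ[X]} {n : ℕ} (a : ℂ) (hp : p.degree ≤ n) :
    ((X - C a) * p).degree ≤ ((n + 1 : ℕ) : WithBot ℕ) := by
  refine le_trans (degree_mul_le _ _) ?_
  rw [degree_X_sub_C]
  calc (1 : WithBot ℕ) + p.degree ≤ 1 + (n : WithBot ℕ) := by
        exact add_le_add le_rfl hp
    _ = ((n + 1 : ℕ) : WithBot ℕ) := by push_cast; ring

lemma deg_X_mul {p : ℂ[X]} {n : ℕ} (hp : p.degree ≤ n) :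
    (X * p).degree ≤ ((n + 1 : ℕ) : WithBot ℕ) := by
  refine le_trans (degree_mul_le _ _) ?_
  refine le_trans (add_le_add degree_X_le hp) ?_
  rw [show ((n + 1 : ℕ) : WithBot ℕ) = 1 + (n : WithBot ℕ) by push_cast; ring]

lemma lt_succ_le {a : WithBot ℕ} {n : ℕ} (h : a < ((n + 1 : ℕ) : WithBot ℕ)) :
    a ≤ (n : WithBot ℕ) := by
  cases a with
  | bot => exact bot_le
  | coe m =>
      rw [Nat.cast_withBot] at h
      rw [Nat.cast_withBot]
      have h2 : m < n + 1 := WithBot.coe_lt_coe.1 h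
      exact WithBot.coe_le_coe.2 (Nat.lt_succ_iff.1 h2)

lemma coeff_linear_mul (a : ℂ) (p : ℂ[X]) (n : ℕ) :
    ((X - C a) * p).coeff (n + 1) = p.coeff n - a * p.coeff (n + 1) := by
  rw [sub_mul, coeff_sub, coeff_X_mul, coeff_C_mul]


end Chr
end

open Chr

/-- coefficients of the conjugated elementary Christoffel transformation
`w ↦ (1 - α* ζ⁻¹) w`. -/
theorem elementary_christoffel_conjugate (w : ℂ → ℂ)
    (hw : ContinuousOn w (Metric.sphere (0 : ℂ) 1))
    (hI : ∀ n, toeplitzDet w n ≠ 0) (S : BOPS w)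
    (α : ℂ) (hα : α ≠ 0) (hφsα : ∀ n, (S.φs n).eval α ≠ 0)
    (T : BOPS (fun ζ => (1 - α * ζ⁻¹) * w ζ)) (n : ℕ) :
    (T.κ n) ^ 2 = S.κ (n + 1) * S.κ n * (S.φs n).eval α / (S.φs (n + 1)).eval α ∧
    T.r n = (S.φ n).eval α / (S.φs n).eval α ∧
    T.rb n = ((S.φb n).eval 0 * (S.φs (n + 1)).eval α
                - (S.φb (n + 1)).eval 0 * α * (S.φs n).eval α)
              / (S.κ (n + 1) * (S.φs n).eval α) := by
  have hv : Continuous fun θ : ℝ => w (e θ) :=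
    hw.comp_continuous cont_e e_mem_sphere
  have hv' : Continuous fun θ : ℝ => (fun ζ => (1 - α * ζ⁻¹) * w ζ) (e θ) := by
    exact (continuous_const.sub (continuous_const.mul (cont_e.inv₀ e_ne))).mul hv
  -- bridges
  have bridge1 : ∀ p q : ℂ[X],
      P (fun ζ => (1 - α * ζ⁻¹) * w ζ) p q = P w ((X - C α) * p) (X * q) := by
    intro p q
    refine circleAvg_congr fun θ => ?_
    simp only [eval_mul, eval_sub, eval_X, eval_C]
    have key : (1 - α * (e θ)⁻¹) = (e θ - α) * (e θ)⁻¹ := by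
      field_simp [e_ne θ]
    rw [key]; ring
  have bridge2 : ∀ p q : ℂ[X],
      P w p q = P (fun ζ => (1 - α * ζ⁻¹) * w ζ) p q + α * P w p (X * q) := by
    intro p q
    have i1 : IntervalIntegrable
        (fun θ : ℝ => (1 - α * (e θ)⁻¹) * w (e θ) * p.eval (e θ) * q.eval (e θ)⁻¹)
        MeasureTheory.volume 0 (2 * Real.pi) := integrable (v := fun ζ => (1 - α * ζ⁻¹) * w ζ) hv' p q
    have i2 : IntervalIntegrable
        (fun θ : ℝ => α * (w (e θ) * p.eval (e θ) * (X * q).eval (e θ)⁻¹))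
        MeasureTheory.volume 0 (2 * Real.pi) := (integrable hv p (X * q)).const_mul α
    have h1 : P w p q = circleAvg (fun ζ =>
        (1 - α * ζ⁻¹) * w ζ * p.eval ζ * q.eval ζ⁻¹
          + α * (w ζ * p.eval ζ * (X * q).eval ζ⁻¹)) := by
      refine circleAvg_congr fun θ => ?_
      simp only [eval_mul, eval_X]
      ring
    have h2 : circleAvg (fun ζ =>
        (1 - α * ζ⁻¹) * w ζ * p.eval ζ * q.eval ζ⁻¹
          + α * (w ζ * p.eval ζ * (X * q).eval ζ⁻¹))
        = circleAvg (fun ζ => (1 - α * ζ⁻¹) * w ζ * p.eval ζ * q.eval ζ⁻¹)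
          + circleAvg (fun ζ => α * (w ζ * p.eval ζ * (X * q).eval ζ⁻¹)) :=
      circleAvg_add i1 i2
    have h3 : circleAvg (fun ζ => α * (w ζ * p.eval ζ * (X * q).eval ζ⁻¹))
        = α * circleAvg (fun ζ => w ζ * p.eval ζ * (X * q).eval ζ⁻¹) :=
      circleAvg_const_mul α _
    rw [h1, h2, h3]
    rfl
  -- shorthand
  set A : ℂ := (S.φs n).eval α with hAdef
  set A1 : ℂ := (S.φs (n + 1)).eval α with hA1def
  have hA : A ≠ 0 := hφsα n
  have hA1 : A1 ≠ 0 := hφsα (n + 1)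
  have hsum : ∑ j ∈ Finset.range (n + 1), (S.φb j).eval 0 * (S.φ j).eval α
      = S.κ n * A := by
    have h := congrArg (Polynomial.eval α) (cd hv S n)
    simpa [eval_finset_sum, eval_mul, eval_C] using h
  have hsum1 : S.κ (n + 1) * A1 = S.κ n * A + (S.φb (n + 1)).eval 0 * (S.φ (n + 1)).eval α := by
    have h := congrArg (Polynomial.eval α) (cd hv S (n + 1))
    rw [eval_finset_sum] at h
    rw [Finset.sum_range_succ] at h
    simp only [eval_mul, eval_C] at h
    rw [hsum] at h
    rw [← hA1def] at h
    linear_combination -h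
  ------------------------------------------------------------------
  -- P-side : Pn := (X - C α) * Φ_n
  ------------------------------------------------------------------
  set Pn : ℂ[X] := (X - C α) * T.φ n with hPn
  have hPdeg : Pn.degree ≤ ((n + 1 : ℕ) : WithBot ℕ) := deg_linear_mul α (T.degφ n)
  have hPtop : Pn.coeff (n + 1) = T.κ n := by
    rw [hPn, coeff_linear_mul, T.leadφ,
      coeff_eq_zero_of_degree_lt (lt_of_le_of_lt (T.degφ n) (by exact_mod_cast Nat.lt_succ_self n)),
      mul_zero, sub_zero]
  set β : ℂ := P w Pn 1 with hβdef
  have hcj : ∀ j, j ≤ n → P w Pn (S.φb j) = (S.φb j).eval 0 * β := by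
    intro j hj
    have hsplit : S.φb j = X * (S.φb j).divX + C ((S.φb j).coeff 0) :=
      (X_mul_divX_add _).symm
    conv_lhs => rw [hsplit]
    rw [P_add_right hv, P_C_right]
    have h1 : P w Pn (X * (S.φb j).divX) = 0 := by
      rw [hPn, ← bridge1, pair_φ hv' T (divX_deg_le (S.degφb j) hj),
        divX_coeff_hi (S.degφb j) hj, zero_div]
    rw [h1, coeff_zero_eq_eval_zero, zero_add, ← hβdef]
  have hcn1 : P w Pn (S.φb (n + 1)) = T.κ n / S.κ (n + 1) := by
    rw [pair_φb hv S hPdeg, hPtop]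
  have hPexp : Pn = C (β * S.κ n) * S.φs n + C (T.κ n / S.κ (n + 1)) * S.φ (n + 1) := by
    calc Pn = ∑ j ∈ Finset.range (n + 1 + 1), C (P w Pn (S.φb j)) * S.φ j :=
          expand_φ hv S hPdeg
      _ = (∑ j ∈ Finset.range (n + 1), C (P w Pn (S.φb j)) * S.φ j)
            + C (P w Pn (S.φb (n + 1))) * S.φ (n + 1) := Finset.sum_range_succ _ _
      _ = (∑ j ∈ Finset.range (n + 1), C β * (C ((S.φb j).eval 0) * S.φ j))
            + C (T.κ n / S.κ (n + 1)) * S.φ (n + 1) := by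
          rw [hcn1]
          congr 1
          refine Finset.sum_congr rfl fun j hj => ?_
          rw [hcj j (Nat.lt_succ_iff.1 (Finset.mem_range.1 hj)), mul_comm ((S.φb j).eval 0) β,
            C_mul, mul_assoc]
      _ = C β * (C (S.κ n) * S.φs n) + C (T.κ n / S.κ (n + 1)) * S.φ (n + 1) := by
          rw [← Finset.mul_sum, cd hv S n]
      _ = C (β * S.κ n) * S.φs n + C (T.κ n / S.κ (n + 1)) * S.φ (n + 1) := by
          rw [← mul_assoc, ← C_mul]
  have hPα : Pn.eval α = 0 := by rw [hPn]; simp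
  have hPev0 : Pn.eval 0 = -α * (T.φ n).eval 0 := by rw [hPn, eval_mul, eval_sub, eval_X, eval_C]; ring
  have hβA : (0 : ℂ) = β * S.κ n * A + T.κ n / S.κ (n + 1) * (S.φ (n + 1)).eval α := by
    have h := congrArg (Polynomial.eval α) hPexp
    rw [hPα] at h
    simpa [eval_mul, eval_C, eval_add, ← hAdef] using h
  have h0 : -α * (T.φ n).eval 0
      = β * S.κ n * S.κ n + T.κ n / S.κ (n + 1) * (S.φ (n + 1)).eval 0 := by
    have h := congrArg (Polynomial.eval 0) hPexp
    rw [hPev0, eval_add, eval_mul, eval_mul, eval_C, eval_C, φs_eval_zero] at h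
    linear_combination h
  have hSRα : (S.φ (n + 1)).eval α
      = S.κ (n + 1) / S.κ n * (α * (S.φ n).eval α)
        + (S.φ (n + 1)).eval 0 / S.κ n * A := by
    have h := congrArg (Polynomial.eval α) (sr hv S n)
    simpa [eval_mul, eval_C, eval_add, eval_X, ← hAdef] using h
  -- division-clearing facts
  have hD : T.κ n / S.κ (n + 1) * S.κ (n + 1) = T.κ n := div_mul_cancel₀ _ (S.κ_ne (n + 1))
  have hc1 : S.κ (n + 1) / S.κ n * S.κ n = S.κ (n + 1) := div_mul_cancel₀ _ (S.κ_ne n)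
  have hc2 : (S.φ (n + 1)).eval 0 / S.κ n * S.κ n = (S.φ (n + 1)).eval 0 :=
    div_mul_cancel₀ _ (S.κ_ne n)
  have s2 : S.κ n * (S.φ (n + 1)).eval α
      = S.κ (n + 1) * (α * (S.φ n).eval α) + (S.φ (n + 1)).eval 0 * A := by
    linear_combination S.κ n * hSRα + α * (S.φ n).eval α * hc1 + A * hc2
  have s3 : α * ((T.φ n).eval 0 * A) = α * (T.κ n * (S.φ n).eval α) := by
    linear_combination (-A) * h0 + S.κ n * hβA + (T.κ n / S.κ (n + 1)) * s2
      + (α * (S.φ n).eval α) * hD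
  have key2 : (T.φ n).eval 0 * A = T.κ n * (S.φ n).eval α := mul_left_cancel₀ hα s3
  ------------------------------------------------------------------
  -- Q-side : Qn := X * Φ̄_n
  ------------------------------------------------------------------
  set Qn : ℂ[X] := X * T.φb n with hQn
  have hQdeg : Qn.degree ≤ ((n + 1 : ℕ) : WithBot ℕ) := deg_X_mul (T.degφb n)
  have hQtop : Qn.coeff (n + 1) = T.κ n := by
    rw [hQn, coeff_X_mul, T.leadφb]
  set δ : ℂ := P w 1 Qn with hδdef
  have hquot : ∀ j : ℕ,
      S.φ j = C ((S.φ j).eval α) + (X - C α) * (S.φ j /ₘ (X - C α)) := by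
    intro j
    conv_lhs => rw [← modByMonic_add_div (S.φ j) (X - C α)]
    rw [modByMonic_X_sub_C_eq_C_eval]
  have hqdeg : ∀ j : ℕ, (S.φ j /ₘ (X - C α)).degree < (j : WithBot ℕ) := by
    intro j
    have hne : S.φ j ≠ 0 := fun h => S.κ_ne j (by rw [← S.leadφ j, h, coeff_zero])
    exact lt_of_lt_of_le (degree_divByMonic_lt _ (X - C α) hne
      (by rw [degree_X_sub_C]; norm_num)) (S.degφ j)
  have hdj : ∀ j, j ≤ n → P w (S.φ j) Qn = (S.φ j).eval α * δ := by
    intro j hj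
    conv_lhs => rw [hquot j]
    rw [P_add_left hv, P_C_left]
    have h1 : P w ((X - C α) * (S.φ j /ₘ (X - C α))) Qn = 0 := by
      rw [hQn, ← bridge1]
      rw [pair_φb hv' T (le_of_lt (lt_of_lt_of_le (hqdeg j) (by exact_mod_cast hj)))]
      rw [coeff_eq_zero_of_degree_lt (lt_of_lt_of_le (hqdeg j) (by exact_mod_cast hj)), zero_div]
    rw [h1, add_zero, ← hδdef]
  have hqcoeff : (S.φ (n + 1) /ₘ (X - C α)).coeff n = S.κ (n + 1) := by
    have h := congrArg (fun p : ℂ[X] => p.coeff (n + 1)) (hquot (n + 1))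
    simp only [coeff_add, coeff_linear_mul] at h
    rw [S.leadφ, coeff_C, if_neg (by omega),
      coeff_eq_zero_of_degree_lt (lt_of_lt_of_le (hqdeg (n+1)) (le_refl _))] at h
    linear_combination -h
  have hdn1 : P w (S.φ (n + 1)) Qn
      = S.κ (n + 1) / T.κ n + (S.φ (n + 1)).eval α * δ := by
    conv_lhs => rw [hquot (n + 1)]
    rw [P_add_left hv, P_C_left]
    have h1 : P w ((X - C α) * (S.φ (n + 1) /ₘ (X - C α))) Qn = S.κ (n + 1) / T.κ n := by
      rw [hQn, ← bridge1]
      rw [pair_φb hv' T (lt_succ_le (hqdeg (n + 1)))]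
      rw [hqcoeff]
    rw [h1, ← hδdef]
    ring
  have hdn1' : P w (S.φ (n + 1)) Qn = T.κ n / S.κ (n + 1) := by
    rw [pair_φ hv S hQdeg, hQtop]
  have hip : T.κ n / S.κ (n + 1) = S.κ (n + 1) / T.κ n + (S.φ (n + 1)).eval α * δ := by
    rw [← hdn1, ← hdn1']
  have hQexp : Qn = (∑ j ∈ Finset.range (n + 1), C ((S.φ j).eval α * δ) * S.φb j)
      + C (T.κ n / S.κ (n + 1)) * S.φb (n + 1) := by
    calc Qn = ∑ j ∈ Finset.range (n + 1 + 1), C (P w (S.φ j) Qn) * S.φb j :=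
          expand_φb hv S hQdeg
      _ = _ := by
          rw [Finset.sum_range_succ, hdn1']
          congr 1
          refine Finset.sum_congr rfl fun j hj => ?_
          rw [hdj j (Nat.lt_succ_iff.1 (Finset.mem_range.1 hj))]
  have hQ0 : Qn.eval 0 = 0 := by rw [hQn]; simp
  have hδA : (0 : ℂ) = δ * (S.κ n * A)
      + T.κ n / S.κ (n + 1) * (S.φb (n + 1)).eval 0 := by
    have h := congrArg (Polynomial.eval 0) hQexp
    rw [hQ0, eval_add, eval_mul, eval_C, eval_finset_sum] at h
    simp only [eval_mul, eval_C] at h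
    have h2 : ∑ j ∈ Finset.range (n + 1), (S.φ j).eval α * δ * (S.φb j).eval 0
        = δ * (S.κ n * A) := by
      rw [← hsum, Finset.mul_sum]
      exact Finset.sum_congr rfl fun j _ => by ring
    rw [h2] at h
    linear_combination h
  -- claim 1
  have hE : S.κ (n + 1) / T.κ n * T.κ n = S.κ (n + 1) := div_mul_cancel₀ _ (T.κ_ne n)
  have t1 : δ * (S.κ n * A) = -(T.κ n / S.κ (n + 1) * (S.φb (n + 1)).eval 0) := by
    linear_combination -hδA
  have t2 : T.κ n * T.κ n * (S.κ n * A)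
      = S.κ (n + 1) * S.κ (n + 1) * (S.κ n * A)
        - (S.φ (n + 1)).eval α * (T.κ n * T.κ n) * (S.φb (n + 1)).eval 0 := by
    linear_combination (T.κ n * S.κ (n + 1) * S.κ n * A) * hip
      + (-(T.κ n * S.κ n * A)) * hD + (S.κ (n + 1) * S.κ n * A) * hE
      + ((S.φ (n + 1)).eval α * T.κ n * S.κ (n + 1)) * t1
      + (-((S.φ (n + 1)).eval α * T.κ n * (S.φb (n + 1)).eval 0)) * hD
  have t4 : T.κ n * T.κ n * A1 = S.κ (n + 1) * (S.κ n * A) := by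
    have h : T.κ n * T.κ n * (S.κ (n + 1) * A1) = S.κ (n + 1) * (S.κ (n + 1) * (S.κ n * A)) := by
      linear_combination t2 + (T.κ n * T.κ n) * hsum1
    have := mul_left_cancel₀ (S.κ_ne (n + 1)) (by linear_combination h :
      S.κ (n + 1) * (T.κ n * T.κ n * A1) = S.κ (n + 1) * (S.κ (n + 1) * (S.κ n * A)))
    exact this
  have claim1 : (T.κ n) ^ 2 = S.κ (n + 1) * S.κ n * A / A1 := by
    rw [eq_div_iff hA1]
    linear_combination t4
  -- claim 3
  have hF : S.κ n / T.κ n * T.κ n = S.κ n := div_mul_cancel₀ _ (T.κ_ne n)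
  have hgj : ∀ j, j ≤ n → P w (S.φ j) (T.φb n)
      = (S.φ j).coeff n / T.κ n + α * ((S.φ j).eval α * δ) := by
    intro j hj
    rw [bridge2 (S.φ j) (T.φb n), ← hQn,
      pair_φb hv' T (le_trans (S.degφ j) (by exact_mod_cast hj)), hdj j hj]
  have hexp3 : T.φb n = ∑ j ∈ Finset.range (n + 1),
      C ((S.φ j).coeff n / T.κ n + α * ((S.φ j).eval α * δ)) * S.φb j := by
    calc T.φb n = ∑ j ∈ Finset.range (n + 1), C (P w (S.φ j) (T.φb n)) * S.φb j :=
          expand_φb hv S (T.degφb n)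
      _ = _ := Finset.sum_congr rfl fun j hj =>
          by rw [hgj j (Nat.lt_succ_iff.1 (Finset.mem_range.1 hj))]
  have h3f : (T.φb n).eval 0
      = S.κ n / T.κ n * (S.φb n).eval 0 + α * (δ * (S.κ n * A)) := by
    have h := congrArg (Polynomial.eval 0) hexp3
    rw [eval_finset_sum] at h
    simp only [eval_mul, eval_C] at h
    have hsplit : ∀ j ∈ Finset.range (n + 1),
        ((S.φ j).coeff n / T.κ n + α * ((S.φ j).eval α * δ)) * (S.φb j).eval 0
        = (S.φ j).coeff n / T.κ n * (S.φb j).eval 0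
          + α * δ * ((S.φb j).eval 0 * (S.φ j).eval α) := fun j _ => by ring
    rw [Finset.sum_congr rfl hsplit, Finset.sum_add_distrib, ← Finset.mul_sum, hsum] at h
    have hone : ∑ j ∈ Finset.range (n + 1), (S.φ j).coeff n / T.κ n * (S.φb j).eval 0
        = S.κ n / T.κ n * (S.φb n).eval 0 := by
      rw [Finset.sum_eq_single n (fun j hj hjn => ?_) (fun h => absurd (Finset.self_mem_range_succ n) h)]
      · rw [S.leadφ]
      · rw [coeff_eq_zero_of_degree_lt (lt_of_le_of_lt (S.degφ j)
          (by exact_mod_cast lt_of_le_of_ne (Nat.lt_succ_iff.1 (Finset.mem_range.1 hj)) hjn)),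
          zero_div, zero_mul]
    rw [hone] at h
    linear_combination h
  have t5 : T.κ n * ((T.φb n).eval 0 * (S.κ (n + 1) * A))
      = T.κ n * (((S.φb n).eval 0 * A1 - (S.φb (n + 1)).eval 0 * α * A) * T.κ n) := by
    linear_combination (T.κ n * S.κ (n + 1) * A) * h3f
      + (α * T.κ n * S.κ (n + 1) * A) * t1
      + (-(α * A * (S.φb (n + 1)).eval 0 * T.κ n)) * hD
      + ((S.φb n).eval 0 * S.κ (n + 1) * A) * hF
      + (-(S.φb n).eval 0) * t4
  have claim3 : (T.φb n).eval 0 / T.κ n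
      = ((S.φb n).eval 0 * A1 - (S.φb (n + 1)).eval 0 * α * A) / (S.κ (n + 1) * A) := by
    rw [div_eq_div_iff (T.κ_ne n) (mul_ne_zero (S.κ_ne (n + 1)) hA)]
    exact mul_left_cancel₀ (T.κ_ne n) t5
  have claim2 : (T.φ n).eval 0 / T.κ n = (S.φ n).eval α / A := by
    rw [div_eq_div_iff (T.κ_ne n) hA]
    linear_combination key2
  exact ⟨claim1, by rw [BOPS.r]; exact claim2, by rw [BOPS.rb]; exact claim3⟩
end

section
/- Let w be a weight with BOPS (φ_n, φ̄_n) and let β* ∈ ℂ∖(𝕋∪{0}) be such that ξ_n(β*) ≠ 0 for all n ≥ 0. Let (Φ_n, Φ̄_n) be a BOPS for the modified weight ζ ↦ w(ζ)/(1−β* ζ^(−1)), with leading coefficients κ⁻_n and coefficients r⁻_n := Φ_n(0)/κ⁻_n, r̄⁻_n := Φ̄_n(0)/κ⁻_n. Then for all n ≥ 1: (κ⁻_n)² = κ_n κ_(n−1) β* ξ_(n−1)(β*)/ξ_n(β*); r⁻_n = (φ_n(0) ξ_(n−1)(β*) − φ_(n−1)(0) ξ_n(β*))/(κ_n ξ_(n−1)(β*));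 and r̄⁻_n = ξ*_(n−1)(β*)/(β* ξ_(n−1)(β*)). -/
open Polynomial Matrix Filter

noncomputable section EGinfra

namespace EG

open MeasureTheory

/-- Continuity on the unit circle. -/
def CtsS (f : ℂ → ℂ) : Prop := ContinuousOn f (Metric.sphere (0:ℂ) 1)

lemma expMem (θ : ℝ) : Complex.exp (θ * Complex.I) ∈ Metric.sphere (0:ℂ) 1 := by
  simp [Complex.dist_eq, Complex.norm_exp_ofReal_mul_I]

lemma absOne {ζ : ℂ} (h : ζ ∈ Metric.sphere (0:ℂ) 1) : ‖ζ‖ = 1 := by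
  simpa [Complex.dist_eq] using h

lemma sph_ne_zero {ζ : ℂ} (h : ζ ∈ Metric.sphere (0:ℂ) 1) : ζ ≠ 0 := by
  intro h0; rw [h0] at h; simp [Complex.dist_eq] at h

lemma sph_ne {ζ β : ℂ} (hβ : ‖β‖ ≠ 1) (h : ζ ∈ Metric.sphere (0:ℂ) 1) : ζ ≠ β := by
  intro h0; exact hβ (h0 ▸ absOne h)

lemma CtsS.intInt {f : ℂ → ℂ} (hf : CtsS f) (a b : ℝ) :
    IntervalIntegrable (fun θ : ℝ => f (Complex.exp (θ * Complex.I))) volume a b :=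
  (hf.comp_continuous (by fun_prop) expMem).intervalIntegrable a b

lemma circleAvg_congr {f g : ℂ → ℂ} (h : ∀ ζ ∈ Metric.sphere (0:ℂ) 1, f ζ = g ζ) :
    circleAvg f = circleAvg g := by
  unfold circleAvg
  congr 1
  exact intervalIntegral.integral_congr fun θ _ => h _ (expMem θ)

lemma circleAvg_add {f g : ℂ → ℂ} (hf : CtsS f) (hg : CtsS g) :
    circleAvg (fun ζ => f ζ + g ζ) = circleAvg f + circleAvg g := by
  unfold circleAvg
  rw [intervalIntegral.integral_add (hf.intInt _ _) (hg.intInt _ _), mul_add]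

lemma circleAvg_const_mul (c : ℂ) (f : ℂ → ℂ) :
    circleAvg (fun ζ => c * f ζ) = c * circleAvg f := by
  unfold circleAvg
  rw [intervalIntegral.integral_const_mul]; ring

lemma circleAvg_sub {f g : ℂ → ℂ} (hf : CtsS f) (hg : CtsS g) :
    circleAvg (fun ζ => f ζ - g ζ) = circleAvg f - circleAvg g := by
  unfold circleAvg
  rw [intervalIntegral.integral_sub (hf.intInt _ _) (hg.intInt _ _), mul_sub]

lemma circleAvg_sum {ι : Type*} (s : Finset ι) (F : ι → ℂ → ℂ)
    (hF : ∀ i ∈ s, CtsS (F i)) :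
    circleAvg (fun ζ => ∑ i ∈ s, F i ζ) = ∑ i ∈ s, circleAvg (F i) := by
  classical
  induction s using Finset.induction with
  | empty => simp [circleAvg]
  | @insert a s ha ih =>
      rw [Finset.sum_insert ha]
      have h1 : circleAvg (fun ζ => F a ζ + ∑ i ∈ s, F i ζ)
          = circleAvg (F a) + circleAvg (fun ζ => ∑ i ∈ s, F i ζ) :=
        circleAvg_add (hF a (Finset.mem_insert_self a s))
          (continuousOn_finset_sum s fun i hi => hF i (Finset.mem_insert_of_mem hi))
      have h2 : (fun ζ => ∑ i ∈ insert a s, F i ζ) = fun ζ => F a ζ + ∑ i ∈ s, F i ζ := by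
        funext ζ; rw [Finset.sum_insert ha]
      rw [h2, h1, ih fun i hi => hF i (Finset.mem_insert_of_mem hi)]

lemma circleAvg_sum_mul {ι : Type*} (s : Finset ι) (c : ι → ℂ) (F : ι → ℂ → ℂ)
    (hF : ∀ i ∈ s, CtsS (F i)) :
    circleAvg (fun ζ => ∑ i ∈ s, c i * F i ζ) = ∑ i ∈ s, c i * circleAvg (F i) := by
  rw [circleAvg_sum s (fun i ζ => c i * F i ζ)
    (fun i hi => continuousOn_const.mul (hF i hi))]
  exact Finset.sum_congr rfl fun i _ => circleAvg_const_mul _ _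

lemma ctsS_eval (p : Polynomial ℂ) : CtsS (fun ζ => p.eval ζ) := p.continuous.continuousOn

lemma ctsS_evalInv (p : Polynomial ℂ) : CtsS (fun ζ => p.eval ζ⁻¹) := by
  apply p.continuous.comp_continuousOn
  exact ContinuousOn.inv₀ continuousOn_id fun ζ hζ => sph_ne_zero hζ

lemma ctsS_invSub {β : ℂ} (hβ : ‖β‖ ≠ 1) : CtsS (fun ζ => (ζ - β)⁻¹) := by
  apply ContinuousOn.inv₀ (by fun_prop)
  intro ζ hζ
  exact sub_ne_zero.mpr (sph_ne hβ hζ)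

lemma ctsS_invPow (m : ℕ) : CtsS (fun ζ : ℂ => (ζ⁻¹) ^ m) := by
  apply ContinuousOn.pow
  exact ContinuousOn.inv₀ continuousOn_id fun ζ hζ => sph_ne_zero hζ

lemma wble {a b : ℕ} (h : a ≤ b) : ((a : ℕ) : WithBot ℕ) ≤ ((b : ℕ) : WithBot ℕ) := by
  exact_mod_cast h

/-- The fundamental pairing of polynomials against a weight. -/
def pairw (v : ℂ → ℂ) (p q : Polynomial ℂ) : ℂ :=
  circleAvg fun ζ => v ζ * p.eval ζ * q.eval ζ⁻¹

lemma ctsS_pair_kernelR (hv : CtsS v) (q : Polynomial ℂ) :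
    CtsS (fun ζ => v ζ * q.eval ζ⁻¹) := hv.mul (ctsS_evalInv q)

lemma pair_orth {v : ℂ → ℂ} (S' : BOPS v) (m k : ℕ) :
    pairw v (S'.φ m) (S'.φb k) = if m = k then 1 else 0 := S'.orth m k

lemma pair_sum_left {v : ℂ → ℂ} (hv : CtsS v) {ι : Type*} (s : Finset ι)
    (c : ι → ℂ) (f : ι → Polynomial ℂ) (q : Polynomial ℂ) :
    pairw v (∑ i ∈ s, c i • f i) q = ∑ i ∈ s, c i * pairw v (f i) q := by
  unfold pairw
  have h1 : (fun ζ => v ζ * (∑ i ∈ s, c i • f i).eval ζ * q.eval ζ⁻¹)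
      = fun ζ => ∑ i ∈ s, c i * (v ζ * (f i).eval ζ * q.eval ζ⁻¹) := by
    funext ζ
    simp only [Polynomial.eval_finset_sum, Polynomial.eval_smul, smul_eq_mul,
      Finset.mul_sum, Finset.sum_mul]
    exact Finset.sum_congr rfl fun i _ => by ring
  rw [h1]
  exact circleAvg_sum_mul s c _ fun i _ =>
    (hv.mul (ctsS_eval (f i))).mul (ctsS_evalInv q)

lemma pair_sum_right {v : ℂ → ℂ} (hv : CtsS v) {ι : Type*} (s : Finset ι)
    (c : ι → ℂ) (f : ι → Polynomial ℂ) (p : Polynomial ℂ) :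
    pairw v p (∑ i ∈ s, c i • f i) = ∑ i ∈ s, c i * pairw v p (f i) := by
  unfold pairw
  have h1 : (fun ζ => v ζ * p.eval ζ * (∑ i ∈ s, c i • f i).eval ζ⁻¹)
      = fun ζ => ∑ i ∈ s, c i * (v ζ * p.eval ζ * (f i).eval ζ⁻¹) := by
    funext ζ
    simp only [Polynomial.eval_finset_sum, Polynomial.eval_smul, smul_eq_mul,
      Finset.mul_sum]
    exact Finset.sum_congr rfl fun i _ => by ring
  rw [h1]
  exact circleAvg_sum_mul s c _ fun i _ =>
    (hv.mul (ctsS_eval p)).mul (ctsS_evalInv (f i))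

/-- Expansion of a polynomial of degree ≤ N in a triangular system. -/
lemma exists_rep (ψ : ℕ → Polynomial ℂ) (κ' : ℕ → ℂ)
    (hdeg : ∀ k, (ψ k).degree ≤ k) (hlead : ∀ k, (ψ k).coeff k = κ' k)
    (hκ : ∀ k, κ' k ≠ 0) :
    ∀ N (p : Polynomial ℂ), p.degree ≤ (N : ℕ) →
      ∃ c : ℕ → ℂ, p = ∑ j ∈ Finset.range (N+1), c j • ψ j := by
  intro N
  induction N with
  | zero =>
      intro p hp
      refine ⟨fun _ => p.coeff 0 / κ' 0, ?_⟩
      rw [Finset.range_one, Finset.sum_singleton]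
      have h0 : ψ 0 = Polynomial.C (κ' 0) := by
        have := Polynomial.eq_C_of_degree_le_zero (by exact_mod_cast hdeg 0)
        rw [this, hlead 0]
      have hp0 : p = Polynomial.C (p.coeff 0) :=
        Polynomial.eq_C_of_degree_le_zero (by exact_mod_cast hp)
      rw [h0, hp0]
      rw [Polynomial.smul_C]
      congr 1
      rw [smul_eq_mul, div_mul_cancel₀ _ (hκ 0), Polynomial.coeff_C_zero]
  | succ N ih =>
      intro p hp
      set d := p.coeff (N+1) / κ' (N+1) with hd
      have hdegsub : (p - d • ψ (N+1)).degree ≤ (N : ℕ) := by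
        rw [Polynomial.degree_le_iff_coeff_zero]
        intro m hm
        have hmN : N < m := by exact_mod_cast hm
        rcases Nat.lt_or_ge m (N+2) with hcase | hcase
        · have hm1 : m = N + 1 := by omega
          subst hm1
          rw [Polynomial.coeff_sub, Polynomial.coeff_smul, hlead, smul_eq_mul, hd,
            div_mul_cancel₀ _ (hκ (N+1)), sub_self]
        · have h1 : p.coeff m = 0 := by
            apply Polynomial.coeff_eq_zero_of_degree_lt
            exact lt_of_le_of_lt hp (by exact_mod_cast (by omega : N + 1 < m))
          have h2 : (ψ (N+1)).coeff m = 0 := by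
            apply Polynomial.coeff_eq_zero_of_degree_lt
            exact lt_of_le_of_lt (hdeg (N+1)) (by exact_mod_cast (by omega : N + 1 < m))
          rw [Polynomial.coeff_sub, Polynomial.coeff_smul, h1, h2, smul_zero, sub_zero]
      obtain ⟨c, hc⟩ := ih (p - d • ψ (N+1)) hdegsub
      refine ⟨fun j => if j = N+1 then d else c j, ?_⟩
      rw [Finset.sum_range_succ]
      simp only [if_pos rfl]
      have : ∑ j ∈ Finset.range (N+1), (if j = N+1 then d else c j) • ψ j
          = ∑ j ∈ Finset.range (N+1), c j • ψ j := by
        refine Finset.sum_congr rfl fun j hj => ?_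
        rw [if_neg (by have := Finset.mem_range.mp hj; omega)]
      rw [this, ← hc]; simp
  
lemma rep_coeff_top (ψ : ℕ → Polynomial ℂ) (κ' : ℕ → ℂ)
    (hdeg : ∀ k, (ψ k).degree ≤ k) (hlead : ∀ k, (ψ k).coeff k = κ' k)
    {N : ℕ} {c : ℕ → ℂ} {p : Polynomial ℂ}
    (hrep : p = ∑ j ∈ Finset.range (N+1), c j • ψ j) :
    p.coeff N = c N * κ' N := by
  rw [hrep, Polynomial.finset_sum_coeff]
  rw [Finset.sum_eq_single N]
  · rw [Polynomial.coeff_smul, hlead, smul_eq_mul]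
  · intro j hj hjne
    have hjN : j < N := by
      rcases Finset.mem_range.mp hj with h
      omega
    rw [Polynomial.coeff_smul]
    rw [Polynomial.coeff_eq_zero_of_degree_lt (lt_of_le_of_lt (hdeg j) (by exact_mod_cast hjN))]
    rw [smul_zero]
  · intro h
    exact absurd (Finset.self_mem_range_succ N) h

section PairLemmas

variable {v : ℂ → ℂ} (S' : BOPS v) (hv : CtsS v)

include hv

lemma rep_pair {N : ℕ} {c : ℕ → ℂ} {p : Polynomial ℂ}
    (hrep : p = ∑ j ∈ Finset.range (N+1), c j • S'.φ j) {k : ℕ} (hk : k ≤ N) :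
    pairw v p (S'.φb k) = c k := by
  rw [hrep, pair_sum_left hv]
  rw [Finset.sum_congr rfl (fun j _ => by rw [pair_orth S' j k])]
  simp [Finset.sum_ite_eq', Finset.mem_range, Nat.lt_succ_of_le hk]

lemma rep_pair' {N : ℕ} {c : ℕ → ℂ} {q : Polynomial ℂ}
    (hrep : q = ∑ j ∈ Finset.range (N+1), c j • S'.φb j) {k : ℕ} (hk : k ≤ N) :
    pairw v (S'.φ k) q = c k := by
  rw [hrep, pair_sum_right hv]
  rw [Finset.sum_congr rfl (fun j _ => by rw [pair_orth S' k j])]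
  simp [Finset.sum_ite_eq, Finset.mem_range, Nat.lt_succ_of_le hk]

/-- P1: pairing a low-degree polynomial against `φb m`. -/
lemma pair_coeff_right {p : Polynomial ℂ} {m : ℕ} (hp : p.degree ≤ (m : ℕ)) :
    pairw v p (S'.φb m) = p.coeff m / S'.κ m := by
  obtain ⟨c, hc⟩ := exists_rep S'.φ S'.κ S'.degφ S'.leadφ S'.κ_ne m p hp
  rw [rep_pair S' hv hc le_rfl]
  have := rep_coeff_top S'.φ S'.κ S'.degφ S'.leadφ hc
  rw [this, mul_div_assoc, div_self (S'.κ_ne m), mul_one]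

/-- P2: pairing `φ m` against a low-degree polynomial. -/
lemma pair_coeff_left {q : Polynomial ℂ} {m : ℕ} (hq : q.degree ≤ (m : ℕ)) :
    pairw v (S'.φ m) q = q.coeff m / S'.κ m := by
  obtain ⟨c, hc⟩ := exists_rep S'.φb S'.κ S'.degφb S'.leadφb S'.κ_ne m q hq
  rw [rep_pair' S' hv hc le_rfl]
  have := rep_coeff_top S'.φb S'.κ S'.degφb S'.leadφb hc
  rw [this, mul_div_assoc, div_self (S'.κ_ne m), mul_one]

lemma pair_zero_right {p : Polynomial ℂ} {m k : ℕ} (hp : p.degree ≤ (m : ℕ)) (hmk : m < k) :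
    pairw v p (S'.φb k) = 0 := by
  obtain ⟨c, hc⟩ := exists_rep S'.φ S'.κ S'.degφ S'.leadφ S'.κ_ne m p hp
  rw [hc, pair_sum_left hv]
  apply Finset.sum_eq_zero
  intro j hj
  rw [pair_orth S' j k, if_neg (by have := Finset.mem_range.mp hj; omega), mul_zero]

lemma pair_zero_left {q : Polynomial ℂ} {m k : ℕ} (hq : q.degree ≤ (m : ℕ)) (hmk : m < k) :
    pairw v (S'.φ k) q = 0 := by
  obtain ⟨c, hc⟩ := exists_rep S'.φb S'.κ S'.degφb S'.leadφb S'.κ_ne m q hq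
  rw [hc, pair_sum_right hv]
  apply Finset.sum_eq_zero
  intro j hj
  rw [pair_orth S' k j, if_neg (by have := Finset.mem_range.mp hj; omega), mul_zero]

lemma eq_zero_of_pair_zero {p : Polynomial ℂ} {m : ℕ} (hp : p.degree ≤ (m : ℕ))
    (h : ∀ k, k ≤ m → pairw v p (S'.φb k) = 0) : p = 0 := by
  obtain ⟨c, hc⟩ := exists_rep S'.φ S'.κ S'.degφ S'.leadφ S'.κ_ne m p hp
  rw [hc]
  apply Finset.sum_eq_zero
  intro j hj
  have hj' : j ≤ m := by have := Finset.mem_range.mp hj; omega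
  have := rep_pair S' hv hc hj'
  rw [h j hj'] at this
  rw [← this, zero_smul]

/-- Expand the second argument of the pairing into monomials. -/
lemma pair_monomial_expand (p q : Polynomial ℂ) {N : ℕ} (hq : q.degree ≤ (N : ℕ)) :
    pairw v p q = ∑ k ∈ Finset.range (N+1), q.coeff k * pairw v p (X ^ k) := by
  conv_lhs => rw [q.as_sum_range' (N+1) (Nat.lt_succ_of_le (Polynomial.natDegree_le_iff_degree_le.mpr hq))]
  have hmon : ∀ k : ℕ, (Polynomial.monomial k (q.coeff k) : Polynomial ℂ) = q.coeff k • X ^ k := by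
    intro k; rw [Polynomial.smul_X_eq_monomial]
  rw [Finset.sum_congr rfl fun k _ => hmon k, pair_sum_right hv]

end PairLemmas

section Analytic

variable {w : ℂ → ℂ} {β : ℂ}

/-- `J p = (1/2πi)∮ w p(ζ)/(ζ-β) dζ/ζ`. -/
def Jf (w : ℂ → ℂ) (β : ℂ) (p : Polynomial ℂ) : ℂ :=
  circleAvg fun ζ => w ζ * p.eval ζ * (ζ - β)⁻¹

/-- `JM m p = (1/2πi)∮ w p(ζ) ζ^{-m}/(ζ-β) dζ/ζ`. -/
def JMf (w : ℂ → ℂ) (β : ℂ) (m : ℕ) (p : Polynomial ℂ) : ℂ :=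
  circleAvg fun ζ => w ζ * p.eval ζ * ((ζ⁻¹) ^ m * (ζ - β)⁻¹)

lemma pairw_Xpow (v : ℂ → ℂ) (p : Polynomial ℂ) (k : ℕ) :
    pairw v p (X ^ k) = circleAvg fun ζ => v ζ * p.eval ζ * (ζ⁻¹) ^ k := by
  unfold pairw; congr 1; funext ζ; simp

lemma Jf_smul_add (hw : CtsS w) (hβT : ‖β‖ ≠ 1) (a b : ℂ) (p q : Polynomial ℂ) :
    Jf w β (a • p + b • q) = a * Jf w β p + b * Jf w β q := by
  unfold Jf
  have h1 : (fun ζ => w ζ * (a • p + b • q).eval ζ * (ζ - β)⁻¹)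
      = fun ζ => a * (w ζ * p.eval ζ * (ζ - β)⁻¹) + b * (w ζ * q.eval ζ * (ζ - β)⁻¹) := by
    funext ζ; simp only [Polynomial.eval_add, Polynomial.eval_smul, smul_eq_mul]; ring
  rw [h1, circleAvg_add, circleAvg_const_mul, circleAvg_const_mul]
  · exact continuousOn_const.mul (((hw.mul (ctsS_eval p)).mul (ctsS_invSub hβT)))
  · exact continuousOn_const.mul (((hw.mul (ctsS_eval q)).mul (ctsS_invSub hβT)))

lemma Jf_sum (hw : CtsS w) (hβT : ‖β‖ ≠ 1) {s : Finset ℕ}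
    (c : ℕ → ℂ) (f : ℕ → Polynomial ℂ) :
    Jf w β (∑ i ∈ s, c i • f i) = ∑ i ∈ s, c i * Jf w β (f i) := by
  unfold Jf
  have h1 : (fun ζ => w ζ * (∑ i ∈ s, c i • f i).eval ζ * (ζ - β)⁻¹)
      = fun ζ => ∑ i ∈ s, c i * (w ζ * (f i).eval ζ * (ζ - β)⁻¹) := by
    funext ζ
    simp only [Polynomial.eval_finset_sum, Polynomial.eval_smul, smul_eq_mul,
      Finset.mul_sum, Finset.sum_mul]
    exact Finset.sum_congr rfl fun i _ => by ring
  rw [h1]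
  exact circleAvg_sum_mul s c _ fun i _ => (hw.mul (ctsS_eval (f i))).mul (ctsS_invSub hβT)

lemma pair_smul_add_left {v : ℂ → ℂ} (hv : CtsS v) (a b : ℂ) (p q r : Polynomial ℂ) :
    pairw v (a • p + b • q) r = a * pairw v p r + b * pairw v q r := by
  unfold pairw
  have h1 : (fun ζ => v ζ * (a • p + b • q).eval ζ * r.eval ζ⁻¹)
      = fun ζ => a * (v ζ * p.eval ζ * r.eval ζ⁻¹) + b * (v ζ * q.eval ζ * r.eval ζ⁻¹) := by
    funext ζ; simp only [Polynomial.eval_add, Polynomial.eval_smul, smul_eq_mul]; ring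
  rw [h1, circleAvg_add, circleAvg_const_mul, circleAvg_const_mul]
  · exact continuousOn_const.mul (((hv.mul (ctsS_eval p)).mul (ctsS_evalInv r)))
  · exact continuousOn_const.mul (((hv.mul (ctsS_eval q)).mul (ctsS_evalInv r)))

/-- Scalar partial-fraction identity. -/
lemma geo_frac (m : ℕ) {ζ : ℂ} (hζ0 : ζ ≠ 0) (hζβ : ζ ≠ β) :
    β ^ m * ((ζ⁻¹) ^ m * (ζ - β)⁻¹)
      = (ζ - β)⁻¹ - ∑ i ∈ Finset.range m, β ^ i * (ζ⁻¹) ^ (i + 1) := by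
  have hzb : ζ - β ≠ 0 := sub_ne_zero.mpr hζβ
  induction m with
  | zero => simp
  | succ m ih =>
      rw [Finset.sum_range_succ]
      have key : (ζ - β)⁻¹ - ζ⁻¹ = β * (ζ⁻¹ * (ζ - β)⁻¹) := by field_simp; ring
      linear_combination ih - β ^ m * (ζ⁻¹) ^ m * key

/-- Reduction of `JM` to `J` and moments. -/
lemma JMf_red (hw : CtsS w) (hβT : ‖β‖ ≠ 1) (m : ℕ) (p : Polynomial ℂ) :
    β ^ m * JMf w β m p
      = Jf w β p - ∑ i ∈ Finset.range m, β ^ i * pairw w p (X ^ (i + 1)) := by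
  unfold JMf Jf
  rw [← circleAvg_const_mul]
  have h1 : circleAvg (fun ζ => β ^ m * (w ζ * p.eval ζ * ((ζ⁻¹) ^ m * (ζ - β)⁻¹)))
      = circleAvg (fun ζ => w ζ * p.eval ζ * (ζ - β)⁻¹
          - ∑ i ∈ Finset.range m, β ^ i * (w ζ * p.eval ζ * (ζ⁻¹) ^ (i + 1))) := by
    apply circleAvg_congr
    intro ζ hζ
    have := geo_frac (β := β) m (sph_ne_zero hζ) (sph_ne hβT hζ)
    calc β ^ m * (w ζ * p.eval ζ * ((ζ⁻¹) ^ m * (ζ - β)⁻¹))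
        = w ζ * p.eval ζ * (β ^ m * ((ζ⁻¹) ^ m * (ζ - β)⁻¹)) := by ring
      _ = w ζ * p.eval ζ * ((ζ - β)⁻¹ - ∑ i ∈ Finset.range m, β ^ i * (ζ⁻¹) ^ (i + 1)) := by
          rw [this]
      _ = w ζ * p.eval ζ * (ζ - β)⁻¹
          - ∑ i ∈ Finset.range m, β ^ i * (w ζ * p.eval ζ * (ζ⁻¹) ^ (i + 1)) := by
          rw [mul_sub, Finset.mul_sum]
          congr 1
          exact Finset.sum_congr rfl fun i _ => by ring
  rw [h1, circleAvg_sub, circleAvg_sum_mul]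
  · congr 1
    exact Finset.sum_congr rfl fun i _ => by rw [pairw_Xpow]
  · exact fun i _ => (hw.mul (ctsS_eval p)).mul (ctsS_invPow (i+1))
  · exact (hw.mul (ctsS_eval p)).mul (ctsS_invSub hβT)
  · apply continuousOn_finset_sum
    exact fun i _ => continuousOn_const.mul ((hw.mul (ctsS_eval p)).mul (ctsS_invPow (i+1)))

/-- Reflection polynomial (explicit). -/
def reflP (N : ℕ) (q : Polynomial ℂ) : Polynomial ℂ :=
  ∑ i ∈ Finset.range (N+1), Polynomial.C (q.coeff i) * X ^ (N - i)

lemma reflP_degree (N : ℕ) (q : Polynomial ℂ) : (reflP N q).degree ≤ (N : ℕ) := by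
  apply Polynomial.degree_sum_le _ _ |>.trans
  apply Finset.sup_le
  intro i _
  apply (Polynomial.degree_C_mul_X_pow_le _ _).trans
  exact_mod_cast Nat.cast_le.mpr (Nat.sub_le N i)

lemma reflP_coeff_top (N : ℕ) (q : Polynomial ℂ) : (reflP N q).coeff N = q.coeff 0 := by
  unfold reflP
  rw [Polynomial.finset_sum_coeff, Finset.sum_eq_single 0]
  · simp
  · intro i hi hne
    have hi' : i ≤ N := by have := Finset.mem_range.mp hi; omega
    rw [Polynomial.coeff_C_mul, Polynomial.coeff_X_pow, if_neg (by omega), mul_zero]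
  · intro h; exact absurd (Finset.mem_range.mpr (by omega)) h

lemma reflP_coeff_self (k : ℕ) (q : Polynomial ℂ) : (reflP k q).coeff k = q.coeff 0 :=
  reflP_coeff_top k q

lemma reflP_eval {N : ℕ} {q : Polynomial ℂ} (hq : q.degree ≤ (N : ℕ)) {ζ : ℂ} (hζ : ζ ≠ 0) :
    (reflP N q).eval ζ = ζ ^ N * q.eval ζ⁻¹ := by
  unfold reflP
  rw [Polynomial.eval_finset_sum]
  rw [q.eval_eq_sum_range' (n := N + 1)
    (Nat.lt_succ_of_le (Polynomial.natDegree_le_iff_degree_le.mpr hq)), Finset.mul_sum]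
  refine Finset.sum_congr rfl fun i hi => ?_
  have hiN : i ≤ N := by have := Finset.mem_range.mp hi; omega
  simp only [Polynomial.eval_mul, Polynomial.eval_C, Polynomial.eval_pow, Polynomial.eval_X]
  rw [mul_comm (ζ ^ N), mul_assoc]
  congr 1
  rw [inv_pow]
  rw [eq_comm, inv_mul_eq_iff_eq_mul₀ (pow_ne_zero i hζ), ← pow_add]
  congr 1
  omega

lemma intK_sum {g : ℂ → ℂ} (hg : CtsS g) {s : Finset ℕ} (c : ℕ → ℂ) (f : ℕ → Polynomial ℂ) :
    circleAvg (fun ζ => g ζ * (∑ i ∈ s, c i • f i).eval ζ)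
      = ∑ i ∈ s, c i * circleAvg (fun ζ => g ζ * (f i).eval ζ) := by
  have h1 : (fun ζ => g ζ * (∑ i ∈ s, c i • f i).eval ζ)
      = fun ζ => ∑ i ∈ s, c i * (g ζ * (f i).eval ζ) := by
    funext ζ
    simp only [Polynomial.eval_finset_sum, Polynomial.eval_smul, smul_eq_mul, Finset.mul_sum]
    exact Finset.sum_congr rfl fun i _ => by ring
  rw [h1]
  exact circleAvg_sum_mul s c _ fun i _ => hg.mul (ctsS_eval (f i))

end Analytic

section Xi

variable {w : ℂ → ℂ} {β : ℂ}

lemma ctsS_caraK (hw : CtsS w) (hβT : ‖β‖ ≠ 1) :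
    CtsS (fun ζ => (ζ + β) / (ζ - β) * w ζ) := by
  apply ContinuousOn.mul _ hw
  apply ContinuousOn.div (by fun_prop) (by fun_prop)
  intro ζ hζ; exact sub_ne_zero.mpr (sph_ne hβT hζ)

lemma phi0_eq (S : BOPS w) : S.φ 0 = Polynomial.C (S.κ 0) := by
  have h := Polynomial.eq_C_of_degree_le_zero
    (show (S.φ 0).degree ≤ 0 from by exact_mod_cast S.degφ 0)
  rw [h, S.leadφ 0]

lemma phib0_eq (S : BOPS w) : S.φb 0 = Polynomial.C (S.κ 0) := by
  have h := Polynomial.eq_C_of_degree_le_zero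
    (show (S.φb 0).degree ≤ 0 from by exact_mod_cast S.degφb 0)
  rw [h, S.leadφb 0]

lemma kappa0 (S : BOPS w) : S.κ 0 * S.κ 0 * fCoeff w 0 = 1 := by
  have h := S.orth 0 0
  rw [if_pos rfl] at h
  have h2 : circleAvg (fun ζ => w ζ * (S.φ 0).eval ζ * (S.φb 0).eval ζ⁻¹)
      = S.κ 0 * S.κ 0 * fCoeff w 0 := by
    unfold fCoeff
    rw [← circleAvg_const_mul]
    congr 1
    funext ζ
    rw [phi0_eq S, phib0_eq S]
    simp
    ring
  rw [h2] at h
  exact h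

lemma xiInt (S : BOPS w) (j : ℕ) :
    S.ξ j β = circleAvg (fun ζ => (ζ + β) / (ζ - β) * w ζ * (S.φ j).eval ζ)
      + (if j = 0 then 1 / S.κ 0 else 0) := by
  cases j with
  | succ k => simp [BOPS.ξ]
  | zero =>
      rw [if_pos rfl]
      show S.κ 0 * (fCoeff w 0 + cara w β) = _
      have h1 : circleAvg (fun ζ => (ζ + β) / (ζ - β) * w ζ * (S.φ 0).eval ζ)
          = S.κ 0 * cara w β := by
        unfold cara
        rw [← circleAvg_const_mul]
        congr 1
        funext ζ
        rw [phi0_eq S]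
        simp
        ring
      rw [h1]
      have hk := kappa0 S
      have hκ := S.κ_ne 0
      have h4 : S.κ 0 * fCoeff w 0 = 1 / S.κ 0 := by
        rw [eq_div_iff hκ]
        linear_combination hk
      rw [mul_add, h4]
      ring

/-- ξ_j in terms of J. -/
lemma xi_J (S : BOPS w) (hw : CtsS w) (hβT : ‖β‖ ≠ 1) (j : ℕ) :
    S.ξ j β = 2 * β * Jf w β (S.φ j) + (if j = 0 then 2 / S.κ 0 else 0) := by
  rw [xiInt S j]
  have h1 : circleAvg (fun ζ => (ζ + β) / (ζ - β) * w ζ * (S.φ j).eval ζ)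
      = pairw w (S.φ j) 1 + 2 * β * Jf w β (S.φ j) := by
    have h2 : circleAvg (fun ζ => (ζ + β) / (ζ - β) * w ζ * (S.φ j).eval ζ)
        = circleAvg (fun ζ => w ζ * (S.φ j).eval ζ * (1:Polynomial ℂ).eval ζ⁻¹
            + 2 * β * (w ζ * (S.φ j).eval ζ * (ζ - β)⁻¹)) := by
      apply circleAvg_congr
      intro ζ hζ
      have hzb : ζ - β ≠ 0 := sub_ne_zero.mpr (sph_ne hβT hζ)
      rw [Polynomial.eval_one]
      field_simp
      ring
    rw [h2, circleAvg_add, circleAvg_const_mul]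
    · rfl
    · exact (hw.mul (ctsS_eval (S.φ j))).mul (ctsS_evalInv 1)
    · exact continuousOn_const.mul ((hw.mul (ctsS_eval (S.φ j))).mul (ctsS_invSub hβT))
  rw [h1]
  have h3 : pairw w (S.φ j) 1 = (if j = 0 then 1 / S.κ 0 else 0) := by
    rw [pair_coeff_left S hw (q := 1) (by simpa using Polynomial.degree_one_le)]
    rcases Nat.eq_zero_or_pos j with hj | hj
    · subst hj; simp
    · rw [if_neg (by omega), Polynomial.coeff_one, if_neg (by omega), zero_div]
  rw [h3]
  rcases Nat.eq_zero_or_pos j with hj | hj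
  · subst hj; simp; ring
  · rw [if_neg (by omega), if_neg (by omega)]; ring

/-- The key summation identity (★). -/
lemma star_identity (S : BOPS w) (hw : CtsS w) (hβT : ‖β‖ ≠ 1) (m : ℕ) :
    ∑ j ∈ Finset.range (m+1), (S.φb j).eval 0 * S.ξ j β
      = 2 - S.κ m * S.ξs m β := by
  have hζb : ∀ ζ ∈ Metric.sphere (0:ℂ) 1, ζ - β ≠ 0 :=
    fun ζ hζ => sub_ne_zero.mpr (sph_ne hβT hζ)
  cases m with
  | zero =>
      rw [Finset.sum_range_one]
      have he : (S.φb 0).eval 0 = S.κ 0 := by rw [phib0_eq S]; simp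
      rw [he]
      show S.κ 0 * (S.κ 0 * (fCoeff w 0 + cara w β))
          = 2 - S.κ 0 * (S.κ 0 * (fCoeff w 0 - cara w β))
      linear_combination 2 * kappa0 S
  | succ k =>
      set m := k + 1 with hm
      -- the reflection of φb m
      set R := reflP m (S.φb m) with hR
      -- Christoffel-Darboux at 0
      have hCD : ∑ j ∈ Finset.range (m+1), ((S.φb j).eval 0) • S.φ j = S.κ m • R := by
        have hpairR : ∀ k', k' ≤ m → pairw w R (S.φb k') = (S.φb k').eval 0 / S.κ m := by
          intro k' hk'
          have hcongr : pairw w R (S.φb k')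
              = pairw w (X ^ (m - k') * reflP k' (S.φb k')) (S.φb m) := by
            unfold pairw
            apply circleAvg_congr
            intro ζ hζ
            have hζ0 := sph_ne_zero hζ
            have hζi0 : ζ⁻¹ ≠ 0 := inv_ne_zero hζ0
            rw [reflP_eval (S.degφb m) hζ0]
            simp only [Polynomial.eval_mul, Polynomial.eval_pow, Polynomial.eval_X]
            rw [reflP_eval (S.degφb k') hζ0]
            have hpow : ζ ^ (m - k') * ζ ^ k' = ζ ^ m := by
              rw [← pow_add]; congr 1; omega
            calc w ζ * (ζ ^ m * (S.φb m).eval ζ⁻¹) * (S.φb k').eval ζ⁻¹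
                = w ζ * ((ζ ^ (m - k') * ζ ^ k') * (S.φb m).eval ζ⁻¹) * (S.φb k').eval ζ⁻¹ := by
                  rw [hpow]
              _ = w ζ * (ζ ^ (m - k') * (ζ ^ k' * (S.φb k').eval ζ⁻¹)) * (S.φb m).eval ζ⁻¹ := by
                  ring
          rw [hcongr]
          have hdeg2 : (X ^ (m - k') * reflP k' (S.φb k')).degree ≤ ((m : ℕ) : WithBot ℕ) := by
            refine (Polynomial.degree_mul_le _ _).trans ?_
            refine (add_le_add (Polynomial.degree_X_pow_le _) (reflP_degree _ _)).trans ?_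
            rw [← Nat.cast_add]
            exact wble (by omega)
          rw [pair_coeff_right S hw hdeg2]
          congr 1
          have h2 : (X ^ (m - k') * reflP k' (S.φb k')).coeff (k' + (m - k'))
              = (reflP k' (S.φb k')).coeff k' := Polynomial.coeff_X_pow_mul _ _ _
          rw [show k' + (m - k') = m by omega] at h2
          rw [h2, reflP_coeff_self, Polynomial.coeff_zero_eq_eval_zero]
        have hdegL : (∑ j ∈ Finset.range (m+1), ((S.φb j).eval 0) • S.φ j).degree ≤ (m : ℕ) := by
          apply Polynomial.degree_sum_le _ _ |>.trans
          apply Finset.sup_le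
          intro j hj
          refine (Polynomial.degree_smul_le _ _).trans ((S.degφ j).trans (wble ?_))
          have := Finset.mem_range.mp hj
          omega
        have hdegD : ((∑ j ∈ Finset.range (m+1), ((S.φb j).eval 0) • S.φ j)
            - S.κ m • R).degree ≤ (m : ℕ) := by
          apply (Polynomial.degree_sub_le _ _).trans
          apply max_le hdegL
          exact (Polynomial.degree_smul_le _ _).trans (reflP_degree _ _)
        have hD0 : (∑ j ∈ Finset.range (m+1), ((S.φb j).eval 0) • S.φ j)
            - S.κ m • R = 0 := by
          apply eq_zero_of_pair_zero S hw hdegD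
          intro k' hk'
          have hsub : (∑ j ∈ Finset.range (m+1), ((S.φb j).eval 0) • S.φ j) - S.κ m • R
              = (1:ℂ) • (∑ j ∈ Finset.range (m+1), ((S.φb j).eval 0) • S.φ j)
                + (-(S.κ m)) • R := by
            rw [one_smul, neg_smul]; ring
          rw [hsub, pair_smul_add_left hw]
          rw [pair_sum_left hw]
          rw [Finset.sum_congr rfl (fun j _ => by rw [pair_orth S j k'])]
          rw [hpairR k' hk']
          have hmem : k' ∈ Finset.range (m+1) := Finset.mem_range.mpr (by omega)
          rw [Finset.sum_congr rfl (fun j _ => by rw [mul_ite, mul_one, mul_zero])]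
          rw [Finset.sum_ite_eq' (Finset.range (m+1)) k' (fun j => (S.φb j).eval 0)]
          rw [if_pos hmem, one_mul, neg_mul, mul_div_assoc']
          rw [mul_div_cancel_left₀ _ (S.κ_ne m)]
          ring
        exact sub_eq_zero.mp hD0
      -- geometric polynomial machinery
      have hκm := S.κ_ne m
      set G : Polynomial ℂ := ∑ i ∈ Finset.range m, X ^ i * (Polynomial.C β) ^ (m - 1 - i) with hG
      have hgeom : G * (X - Polynomial.C β) = X ^ m - (Polynomial.C β) ^ m :=
        geom_sum₂_mul X (Polynomial.C β) m
      set P : Polynomial ℂ := (X + Polynomial.C β) * G with hP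
      have hGdeg : G.degree ≤ ((m - 1 : ℕ) : WithBot ℕ) := by
        apply Polynomial.degree_sum_le _ _ |>.trans
        apply Finset.sup_le
        intro i hi
        apply Polynomial.degree_mul_le _ _ |>.trans
        calc ((X : Polynomial ℂ) ^ i).degree + ((Polynomial.C β) ^ (m - 1 - i)).degree
            ≤ ((i : ℕ) : WithBot ℕ) + 0 :=
              add_le_add (Polynomial.degree_X_pow_le i)
                (by rw [← Polynomial.C_pow]; exact Polynomial.degree_C_le)
          _ ≤ ((m - 1 : ℕ) : WithBot ℕ) := by
              rw [add_zero]
              exact wble (by have := Finset.mem_range.mp hi; omega)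
      have hPdeg : P.degree ≤ ((m : ℕ) : WithBot ℕ) := by
        apply Polynomial.degree_mul_le _ _ |>.trans
        calc (X + Polynomial.C β).degree + G.degree
            ≤ 1 + ((m - 1 : ℕ) : WithBot ℕ) :=
              add_le_add (le_of_eq (Polynomial.degree_X_add_C β)) hGdeg
          _ = ((m : ℕ) : WithBot ℕ) := by
              rw [show ((1 : WithBot ℕ)) = ((1 : ℕ) : WithBot ℕ) from rfl, ← Nat.cast_add]
              congr 1
              omega
      have hGcm : G.coeff m = 0 :=
        Polynomial.coeff_eq_zero_of_degree_lt
          (lt_of_le_of_lt hGdeg (by exact_mod_cast (by omega : m - 1 < m)))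

      have hPexp : P = (X ^ m - (Polynomial.C β) ^ m)
          + (Polynomial.C β * G + Polynomial.C β * G) := by
        rw [← hgeom]; ring
      have hPcoeff : P.coeff m = 1 := by
        rw [hPexp, Polynomial.coeff_add, Polynomial.coeff_sub, Polynomial.coeff_X_pow,
          if_pos rfl, ← Polynomial.C_pow, Polynomial.coeff_C, if_neg (by omega),
          Polynomial.coeff_add, Polynomial.coeff_C_mul, hGcm]
        ring
      have hpairP : pairw w P (S.φb m) = 1 / S.κ m := by
        rw [pair_coeff_right S hw hPdeg, hPcoeff]
      -- the key integral identity
      have hA : CtsS (fun ζ => (ζ + β) / (ζ - β) * w ζ * R.eval ζ) :=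
        (ctsS_caraK hw hβT).mul (ctsS_eval R)
      have hB : CtsS (fun ζ => β ^ m * ((ζ + β) / (ζ - β) * w ζ * (S.φb m).eval ζ⁻¹)) :=
        continuousOn_const.mul ((ctsS_caraK hw hβT).mul (ctsS_evalInv _))
      have hkey : circleAvg (fun ζ => (ζ + β) / (ζ - β) * w ζ * R.eval ζ)
          - β ^ m * circleAvg (fun ζ => (ζ + β) / (ζ - β) * w ζ * (S.φb m).eval ζ⁻¹)
          = 1 / S.κ m := by
        rw [← circleAvg_const_mul (β ^ m), ← circleAvg_sub hA hB]
        rw [show circleAvg (fun ζ => (ζ + β) / (ζ - β) * w ζ * R.eval ζ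
            - β ^ m * ((ζ + β) / (ζ - β) * w ζ * (S.φb m).eval ζ⁻¹))
            = pairw w P (S.φb m) from ?_, hpairP]
        apply circleAvg_congr
        intro ζ hζ
        have hζ0 := sph_ne_zero hζ
        have hzb := hζb ζ hζ
        have hGe : G.eval ζ * (ζ - β) = ζ ^ m - β ^ m := by
          have := congrArg (Polynomial.eval ζ) hgeom
          simpa using this
        have hCP : (ζ + β) / (ζ - β) * (ζ ^ m - β ^ m) = P.eval ζ := by
          rw [← hGe, hP]
          simp only [Polynomial.eval_mul, Polynomial.eval_add, Polynomial.eval_X,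
            Polynomial.eval_C]
          field_simp
        rw [reflP_eval (S.degφb m) hζ0]
        calc (ζ + β) / (ζ - β) * w ζ * (ζ ^ m * (S.φb m).eval ζ⁻¹)
            - β ^ m * ((ζ + β) / (ζ - β) * w ζ * (S.φb m).eval ζ⁻¹)
            = ((ζ + β) / (ζ - β) * (ζ ^ m - β ^ m)) * w ζ * (S.φb m).eval ζ⁻¹ := by ring
          _ = w ζ * P.eval ζ * (S.φb m).eval ζ⁻¹ := by rw [hCP]; ring
      -- assembling
      have hsum : ∑ j ∈ Finset.range (m+1), (S.φb j).eval 0 * S.ξ j β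
          = S.κ m * circleAvg (fun ζ => (ζ + β) / (ζ - β) * w ζ * R.eval ζ) + 1 := by
        rw [Finset.sum_congr rfl (fun j _ => by rw [xiInt S j, mul_add])]
        rw [Finset.sum_add_distrib]
        congr 1
        · rw [← intK_sum (ctsS_caraK hw hβT) (fun j => (S.φb j).eval 0) S.φ]
          rw [hCD]
          have heq : (fun ζ => ((ζ + β) / (ζ - β) * w ζ) * (S.κ m • R).eval ζ)
              = fun ζ => S.κ m * ((ζ + β) / (ζ - β) * w ζ * R.eval ζ) := by
            funext ζ
            simp only [Polynomial.eval_smul, smul_eq_mul]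
            ring
          rw [heq, circleAvg_const_mul]
        · rw [Finset.sum_eq_single 0]
          · rw [if_pos rfl]
            have : (S.φb 0).eval 0 = S.κ 0 := by rw [phib0_eq S]; simp
            rw [this, mul_one_div]
            exact div_self (S.κ_ne 0)
          · intro j _ hj
            rw [if_neg hj, mul_zero]
          · intro h
            exact absurd (Finset.mem_range.mpr (by omega)) h
      have hxis : S.ξs m β
          = -β ^ m * circleAvg (fun ζ => (ζ + β) / (ζ - β) * w ζ * (S.φb m).eval ζ⁻¹) := by
        rw [hm]
        simp [BOPS.ξs]
      have hkey2 : S.κ m * ((circleAvg fun ζ => (ζ + β) / (ζ - β) * w ζ * R.eval ζ)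
          - β ^ m * circleAvg (fun ζ => (ζ + β) / (ζ - β) * w ζ * (S.φb m).eval ζ⁻¹)) = 1 := by
        rw [hkey, mul_one_div, div_self (S.κ_ne m)]
      rw [hsum, hxis]
      linear_combination hkey2

/-- The modified weight of the Geronimus transformation. -/
def Wmod (w : ℂ → ℂ) (β : ℂ) : ℂ → ℂ := fun ζ => w ζ / (1 - β * ζ⁻¹)

end Xi

end EG

end EGinfra

open EG in
private lemma egc_main (w : ℂ → ℂ)
    (hw : ContinuousOn w (Metric.sphere (0 : ℂ) 1)) (S : BOPS w)
    (β : ℂ) (hβT : ‖β‖ ≠ 1) (hβ0 : β ≠ 0)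
    (hξβ : ∀ n, S.ξ n β ≠ 0)
    (T : BOPS (EG.Wmod w β))
    (d : ℕ) :
    (T.κ (d+1)) ^ 2 = S.κ (d+1) * S.κ d * β * S.ξ d β / S.ξ (d+1) β ∧
    T.r (d+1) = ((S.φ (d+1)).eval 0 * S.ξ d β - (S.φ d).eval 0 * S.ξ (d+1) β)
              / (S.κ (d+1) * S.ξ d β) ∧
    T.rb (d+1) = S.ξs d β / (β * S.ξ d β) := by
  classical
  have hwS : CtsS w := hw
  have hβsub : ∀ ζ ∈ Metric.sphere (0:ℂ) 1, ζ - β ≠ 0 :=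
    fun ζ hζ => sub_ne_zero.mpr (sph_ne hβT hζ)
  have hden : ∀ ζ ∈ Metric.sphere (0:ℂ) 1, 1 - β * ζ⁻¹ ≠ 0 := by
    intro ζ hζ h0
    have hζ0 := sph_ne_zero hζ
    apply hβsub ζ hζ
    have h2 : ζ * (1 - β * ζ⁻¹) = ζ - β := by field_simp
    rw [← h2, h0, mul_zero]
  have hWs : ∀ ζ ∈ Metric.sphere (0:ℂ) 1, Wmod w β ζ = w ζ * ζ * (ζ - β)⁻¹ := by
    intro ζ hζ
    have hζ0 := sph_ne_zero hζ
    have hzb := hβsub ζ hζ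
    show w ζ / (1 - β * ζ⁻¹) = w ζ * ζ * (ζ - β)⁻¹
    rw [div_eq_iff (hden ζ hζ)]
    field_simp
  have hWc : CtsS (Wmod w β) := by
    apply ContinuousOn.div hw _ hden
    exact continuousOn_const.sub (continuousOn_const.mul
      (ContinuousOn.inv₀ continuousOn_id fun ζ hζ => sph_ne_zero hζ))
  -- expansion of T.φ (d+1) in the S-basis
  obtain ⟨c, hc⟩ := exists_rep S.φ S.κ S.degφ S.leadφ S.κ_ne (d+1) (T.φ (d+1)) (T.degφ (d+1))
  have hctop : T.κ (d+1) = c (d+1) * S.κ (d+1) := by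
    have h := rep_coeff_top S.φ S.κ S.degφ S.leadφ hc
    rw [T.leadφ (d+1)] at h
    exact h
  -- vanishing moments against plain w
  have hμ0 : ∀ k, k + 1 ≤ d → pairw w (T.φ (d+1)) (X ^ k) = 0 := by
    intro k hk
    have hW1 : pairw (Wmod w β) (T.φ (d+1)) (X ^ k) = 0 :=
      pair_zero_left T hWc ((Polynomial.degree_X_pow_le k).trans (wble (by omega)))
        (Nat.lt_succ_self d)
    have hW2 : pairw (Wmod w β) (T.φ (d+1)) (X ^ (k+1)) = 0 :=
      pair_zero_left T hWc ((Polynomial.degree_X_pow_le (k+1)).trans (wble (by omega)))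
        (Nat.lt_succ_self d)
    have hconv : pairw w (T.φ (d+1)) (X ^ k)
        = pairw (Wmod w β) (T.φ (d+1)) (X ^ k)
          - β * pairw (Wmod w β) (T.φ (d+1)) (X ^ (k+1)) := by
      rw [pairw_Xpow, pairw_Xpow, pairw_Xpow, ← circleAvg_const_mul, ← circleAvg_sub
        (f := fun ζ => Wmod w β ζ * (T.φ (d+1)).eval ζ * (ζ⁻¹) ^ k)
        (g := fun ζ => β * (Wmod w β ζ * (T.φ (d+1)).eval ζ * (ζ⁻¹) ^ (k+1)))
        ((hWc.mul (ctsS_eval _)).mul (ctsS_invPow k))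
        (continuousOn_const.mul ((hWc.mul (ctsS_eval _)).mul (ctsS_invPow (k+1))))]
      apply circleAvg_congr
      intro ζ hζ
      have hζ0 := sph_ne_zero hζ
      have hzb := hβsub ζ hζ
      rw [hWs ζ hζ]
      have hp1 : (ζ⁻¹) ^ (k+1) = (ζ⁻¹) ^ k * ζ⁻¹ := by rw [pow_succ]
      rw [hp1]
      calc w ζ * (T.φ (d + 1)).eval ζ * (ζ⁻¹) ^ k
          = w ζ * (T.φ (d + 1)).eval ζ * (ζ⁻¹) ^ k * ((ζ - β) * (ζ - β)⁻¹) := by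
            rw [mul_inv_cancel₀ hzb, mul_one]
        _ = (w ζ * (T.φ (d+1)).eval ζ * (ζ⁻¹) ^ k * (ζ - β)⁻¹ * ζ)
            - β * (w ζ * (T.φ (d+1)).eval ζ * (ζ⁻¹) ^ k * (ζ - β)⁻¹ * (ζ * ζ⁻¹)) := by
            rw [mul_inv_cancel₀ hζ0]
            ring
        _ = w ζ * ζ * (ζ - β)⁻¹ * (T.φ (d+1)).eval ζ * (ζ⁻¹) ^ k
            - β * (w ζ * ζ * (ζ - β)⁻¹ * (T.φ (d+1)).eval ζ * ((ζ⁻¹) ^ k * ζ⁻¹)) := by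
            ring
    rw [hconv, hW1, hW2]
    ring
  have hcz : ∀ j, j + 1 ≤ d → c j = 0 := by
    intro j hj
    have h1 : pairw w (T.φ (d+1)) (S.φb j) = c j := rep_pair S hwS hc (by omega)
    rw [pair_monomial_expand hwS _ _ (S.degφb j)] at h1
    rw [← h1]
    apply Finset.sum_eq_zero
    intro k hk
    rw [hμ0 k (by have := Finset.mem_range.mp hk; omega), mul_zero]
  have hTphi : T.φ (d+1) = c d • S.φ d + c (d+1) • S.φ (d+1) := by
    rw [hc, Finset.sum_range_succ, Finset.sum_range_succ]
    have h0 : ∑ j ∈ Finset.range d, c j • S.φ j = 0 :=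
      Finset.sum_eq_zero fun j hj => by
        rw [hcz j (by have := Finset.mem_range.mp hj; omega), zero_smul]
    rw [h0, zero_add]
  have hJT : Jf w β (T.φ (d+1)) = c d * Jf w β (S.φ d) + c (d+1) * Jf w β (S.φ (d+1)) := by
    rw [hTphi, Jf_smul_add hwS hβT]
  have hμd : pairw w (T.φ (d+1)) (X ^ d) = c d / S.κ d := by
    rw [hTphi, pair_smul_add_left hwS]
    rw [pair_coeff_left S hwS (q := X ^ d) (Polynomial.degree_X_pow_le d)]
    rw [pair_zero_left S hwS (q := X ^ d) (m := d) (Polynomial.degree_X_pow_le d)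
      (Nat.lt_succ_self d)]
    rw [Polynomial.coeff_X_pow, if_pos rfl]
    ring
  -- reduction of W-moments
  have hred : ∀ M : ℕ, 1 ≤ M →
      pairw (Wmod w β) (T.φ (d+1)) (X ^ M) = JMf w β (M-1) (T.φ (d+1)) := by
    intro M hM
    rw [pairw_Xpow]
    apply circleAvg_congr
    intro ζ hζ
    have hζ0 := sph_ne_zero hζ
    rw [hWs ζ hζ]
    have hpow : (ζ⁻¹) ^ M = ζ⁻¹ * (ζ⁻¹) ^ (M-1) := by
      rw [← pow_succ']
      congr 1
      omega
    rw [hpow]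
    calc w ζ * ζ * (ζ - β)⁻¹ * (T.φ (d+1)).eval ζ * (ζ⁻¹ * (ζ⁻¹) ^ (M-1))
        = w ζ * (T.φ (d+1)).eval ζ * ((ζ⁻¹) ^ (M-1) * (ζ - β)⁻¹) * (ζ * ζ⁻¹) := by ring
      _ = w ζ * (T.φ (d+1)).eval ζ * ((ζ⁻¹) ^ (M-1) * (ζ - β)⁻¹) := by
          rw [mul_inv_cancel₀ hζ0, mul_one]
  have hnorm : pairw (Wmod w β) (T.φ (d+1)) (X ^ (d+1)) * T.κ (d+1) = 1 := by
    rw [pair_coeff_left T hWc (q := X ^ (d+1)) (Polynomial.degree_X_pow_le (d+1))]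
    rw [Polynomial.coeff_X_pow, if_pos rfl]
    exact one_div_mul_cancel (T.κ_ne (d+1))
  have X0 := xi_J S hwS hβT
  -- the two main scalar relations
  have hbrel : c d * T.κ (d+1) = -β * S.κ d ∧
      c (d+1) * S.ξ (d+1) β + c d * S.ξ d β = 0 := by
    rcases Nat.eq_zero_or_pos d with hd0 | hdpos
    · subst hd0
      have hκ0 := S.κ_ne 0
      have hκT := T.κ_ne 1
      have hO : pairw (Wmod w β) (T.φ 1) (X ^ 0) = 0 :=
        pair_zero_left T hWc (q := X ^ 0) (m := 0)
          (by simpa using Polynomial.degree_X_pow_le 0) Nat.zero_lt_one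
      have hred0 : pairw (Wmod w β) (T.φ 1) (X ^ 0)
          = pairw w (T.φ 1) (X ^ 0) + β * Jf w β (T.φ 1) := by
        rw [pairw_Xpow, pairw_Xpow]
        unfold Jf
        rw [← circleAvg_const_mul, ← circleAvg_add
          (f := fun ζ => w ζ * (T.φ 1).eval ζ * (ζ⁻¹) ^ 0)
          (g := fun ζ => β * (w ζ * (T.φ 1).eval ζ * (ζ - β)⁻¹))
          (by exact (hwS.mul (ctsS_eval (T.φ 1))).mul (ctsS_invPow 0))
          (continuousOn_const.mul ((hwS.mul (ctsS_eval (T.φ 1))).mul (ctsS_invSub hβT)))]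
        apply circleAvg_congr
        intro ζ hζ
        have hζ0 := sph_ne_zero hζ
        have hzb := hβsub ζ hζ
        rw [hWs ζ hζ]
        have hfr : ζ * (ζ - β)⁻¹ = 1 + β * (ζ - β)⁻¹ := by
          field_simp
          ring
        calc w ζ * ζ * (ζ - β)⁻¹ * (T.φ 1).eval ζ * (ζ⁻¹) ^ 0
            = w ζ * (T.φ 1).eval ζ * (ζ * (ζ - β)⁻¹) := by ring
          _ = w ζ * (T.φ 1).eval ζ * (1 + β * (ζ - β)⁻¹) := by rw [hfr]
          _ = w ζ * (T.φ 1).eval ζ * (ζ⁻¹) ^ 0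
              + β * (w ζ * (T.φ 1).eval ζ * (ζ - β)⁻¹) := by ring
      have E1 : c 0 / S.κ 0 + β * Jf w β (T.φ 1) = 0 := by
        rw [← hμd, ← hred0, hO]
      have E1a : c 0 + β * Jf w β (T.φ 1) * S.κ 0 = 0 := by
        have h6 := congrArg (fun x : ℂ => x * S.κ 0) E1
        simp only [zero_mul, add_mul] at h6
        rw [div_mul_cancel₀ _ hκ0] at h6
        linear_combination h6
      have E3' : Jf w β (T.φ 1) * T.κ 1 = 1 := by
        have h1 := hred 1 le_rfl
        have h2 := JMf_red hwS hβT 0 (T.φ 1)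
        simp only [Finset.range_zero, Finset.sum_empty, sub_zero, pow_zero, one_mul] at h2
        norm_num at h1 hnorm
        rw [h1, h2] at hnorm
        exact hnorm
      constructor
      · linear_combination T.κ 1 * E1a - β * S.κ 0 * E3'
      · have E2 := hJT
        rw [X0 0, X0 1, if_pos rfl, if_neg one_ne_zero]
        have hinv0 : S.κ 0 * (S.κ 0)⁻¹ = 1 := mul_inv_cancel₀ hκ0
        apply mul_left_cancel₀ hκ0
        rw [mul_zero]
        rw [div_eq_mul_inv]
        linear_combination 2 * E1a - 2 * β * S.κ 0 * E2 + 2 * c 0 * hinv0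
    · obtain ⟨e0, rfl⟩ : ∃ e0, d = e0 + 1 := ⟨d - 1, by omega⟩
      have hκd := S.κ_ne (e0+1)
      have hκT := T.κ_ne (e0+1+1)
      -- gamma = 0
      have hO : pairw (Wmod w β) (T.φ (e0+1+1)) (X ^ (e0+1)) = 0 :=
        pair_zero_left T hWc ((Polynomial.degree_X_pow_le (e0+1)).trans (wble (by omega)))
          (Nat.lt_succ_self (e0+1))
      have h1 := hred (e0+1) (by omega)
      rw [hO] at h1
      have h2 := JMf_red hwS hβT e0 (T.φ (e0+1+1))
      have hz : ∑ i ∈ Finset.range e0, β ^ i * pairw w (T.φ (e0+1+1)) (X ^ (i+1)) = 0 :=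
        Finset.sum_eq_zero fun i hi => by
          rw [hμ0 (i+1) (by have := Finset.mem_range.mp hi; omega), mul_zero]
      rw [hz, sub_zero] at h2
      have hM1 : (e0 + 1) - 1 = e0 := by omega
      rw [hM1] at h1
      rw [← h1, mul_zero] at h2
      have hγ : Jf w β (T.φ (e0+1+1)) = 0 := h2.symm
      -- norm equation
      have h3 := hred (e0+1+1) (by omega)
      have h4 := JMf_red hwS hβT (e0+1) (T.φ (e0+1+1))
      rw [Finset.sum_range_succ, hz, zero_add] at h4
      have hM2 : (e0 + 1 + 1) - 1 = e0 + 1 := by omega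
      rw [hM2] at h3
      rw [hγ, hμd] at h4
      rw [h3] at hnorm
      -- h4 : β^(e0+1) * pairw W Tφ X^(e0+1+1) = 0 - β^e0 * (c (e0+1) / S.κ (e0+1))
      constructor
      · have hβe : (β:ℂ) ^ e0 ≠ 0 := pow_ne_zero _ hβ0
        have hiκ : S.κ (e0+1) * (S.κ (e0+1))⁻¹ = 1 := mul_inv_cancel₀ hκd
        apply mul_left_cancel₀ hβe
        rw [div_eq_mul_inv] at h4
        linear_combination (S.κ (e0+1) * T.κ (e0+1+1)) * h4
          - β ^ (e0+1) * S.κ (e0+1) * hnorm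
          - β ^ e0 * c (e0+1) * T.κ (e0+1+1) * hiκ
      · rw [X0 (e0+1), X0 (e0+1+1), if_neg (by omega), if_neg (by omega)]
        have E2 := hJT
        rw [hγ] at E2
        linear_combination (2*β) * E2.symm
  obtain ⟨hb, hgam⟩ := hbrel
  have key1 : T.κ (d+1) ^ 2 * S.ξ (d+1) β = S.κ (d+1) * S.κ d * β * S.ξ d β := by
    linear_combination (T.κ (d+1) * S.ξ (d+1) β) * hctop
      + (S.κ (d+1) * T.κ (d+1)) * hgam - (S.κ (d+1) * S.ξ d β) * hb
  refine ⟨?_, ?_, ?_⟩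
  · rw [eq_div_iff (hξβ (d+1))]
    exact key1
  · show (T.φ (d+1)).eval 0 / T.κ (d+1) = _
    rw [div_eq_div_iff (T.κ_ne (d+1)) (mul_ne_zero (S.κ_ne (d+1)) (hξβ d))]
    have heval : (T.φ (d+1)).eval 0
        = c d * (S.φ d).eval 0 + c (d+1) * (S.φ (d+1)).eval 0 := by
      rw [hTphi]
      simp
    rw [heval]
    linear_combination ((S.φ d).eval 0 * S.ξ (d+1) β - (S.φ (d+1)).eval 0 * S.ξ d β) * hctop
      + ((S.φ d).eval 0 * S.κ (d+1)) * hgam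
  · -- rb part
    set Q := reflP (d+1) (T.φb (d+1)) with hQ
    have hQdeg : Q.degree ≤ ((d+1 : ℕ) : WithBot ℕ) := reflP_degree _ _
    have hQtop : Q.coeff (d+1) = (T.φb (d+1)).eval 0 := by
      rw [hQ, reflP_coeff_top, Polynomial.coeff_zero_eq_eval_zero]
    have hQev : ∀ ζ ∈ Metric.sphere (0:ℂ) 1,
        (T.φb (d+1)).eval ζ⁻¹ = (ζ⁻¹) ^ (d+1) * Q.eval ζ := by
      intro ζ hζ
      have hζ0 := sph_ne_zero hζ
      rw [hQ, reflP_eval (T.degφb (d+1)) hζ0]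
      rw [← mul_assoc, ← mul_pow, inv_mul_cancel₀ hζ0, one_pow, one_mul]
    have hOR : ∀ k : ℕ, k ≤ d+1 → pairw (Wmod w β) (X ^ k) (T.φb (d+1))
        = (X ^ k : Polynomial ℂ).coeff (d+1) / T.κ (d+1) :=
      fun k hk => pair_coeff_right T hWc ((Polynomial.degree_X_pow_le k).trans (wble hk))
    have hconvQ : ∀ k : ℕ, k ≤ d →
        pairw (Wmod w β) (X ^ k) (T.φb (d+1)) = JMf w β (d - k) Q := by
      intro k hk
      unfold pairw JMf
      apply circleAvg_congr
      intro ζ hζ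
      have hζ0 := sph_ne_zero hζ
      rw [hWs ζ hζ, hQev ζ hζ]
      simp only [Polynomial.eval_pow, Polynomial.eval_X]
      have hsplit : (ζ⁻¹) ^ (d+1) = (ζ⁻¹) ^ (d-k) * (ζ⁻¹) ^ (k+1) := by
        rw [← pow_add]
        congr 1
        omega
      rw [hsplit]
      calc w ζ * ζ * (ζ - β)⁻¹ * ζ ^ k * ((ζ⁻¹) ^ (d-k) * (ζ⁻¹) ^ (k+1) * Q.eval ζ)
          = w ζ * Q.eval ζ * ((ζ⁻¹) ^ (d-k) * (ζ - β)⁻¹) * ((ζ * ζ⁻¹) ^ (k+1)) := by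
            rw [mul_pow]
            ring
        _ = w ζ * Q.eval ζ * ((ζ⁻¹) ^ (d-k) * (ζ - β)⁻¹) := by
            rw [mul_inv_cancel₀ hζ0, one_pow, mul_one]
    have hJMQ : ∀ mq, mq ≤ d → JMf w β mq Q = 0 := by
      intro mq hmq
      have hk : d - (d - mq) = mq := by omega
      have h1 := hconvQ (d - mq) (by omega)
      rw [hk] at h1
      rw [← h1, hOR (d - mq) (by omega), Polynomial.coeff_X_pow, if_neg (by omega), zero_div]
    have hγs : Jf w β Q = 0 := by
      have h2 := JMf_red hwS hβT 0 Q
      simp only [Finset.range_zero, Finset.sum_empty, sub_zero, pow_zero, one_mul] at h2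
      rw [← h2, hJMQ 0 (by omega)]
    have hνs : ∀ j, j ≤ d → 1 ≤ j → pairw w Q (X ^ j) = 0 := by
      intro j
      induction j using Nat.strong_induction_on with
      | _ j ih =>
        intro hjd hj1
        obtain ⟨j', rfl⟩ : ∃ j', j = j' + 1 := ⟨j - 1, by omega⟩
        have h0 := JMf_red hwS hβT (j'+1) Q
        rw [hJMQ (j'+1) hjd, hγs, mul_zero, Finset.sum_range_succ] at h0
        have hzz : ∑ i ∈ Finset.range j', β ^ i * pairw w Q (X ^ (i+1)) = 0 :=
          Finset.sum_eq_zero fun i hi => by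
            rw [ih (i+1) (by have := Finset.mem_range.mp hi; omega)
              (by have := Finset.mem_range.mp hi; omega) (by omega), mul_zero]
        rw [hzz, zero_add] at h0
        have h5 : β ^ j' * pairw w Q (X ^ (j'+1)) = 0 := by linear_combination h0
        exact (mul_eq_zero.mp h5).resolve_left (pow_ne_zero _ hβ0)
    have hν0 : pairw w Q (X ^ 0) * T.κ (d+1) = 1 := by
      have hOR1 : pairw (Wmod w β) (X ^ (d+1)) (T.φb (d+1)) * T.κ (d+1) = 1 := by
        rw [hOR (d+1) le_rfl, Polynomial.coeff_X_pow, if_pos rfl]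
        exact one_div_mul_cancel (T.κ_ne _)
      have hconv1 : pairw (Wmod w β) (X ^ (d+1)) (T.φb (d+1))
          = pairw w Q (X ^ 0) + β * Jf w β Q := by
        unfold pairw Jf
        rw [← circleAvg_const_mul, ← circleAvg_add
          (f := fun ζ => w ζ * Q.eval ζ * (X ^ 0 : Polynomial ℂ).eval ζ⁻¹)
          (g := fun ζ => β * (w ζ * Q.eval ζ * (ζ - β)⁻¹))
          ((hwS.mul (ctsS_eval Q)).mul (ctsS_evalInv _))
          (continuousOn_const.mul ((hwS.mul (ctsS_eval Q)).mul (ctsS_invSub hβT)))]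
        apply circleAvg_congr
        intro ζ hζ
        have hζ0 := sph_ne_zero hζ
        have hzb := hβsub ζ hζ
        rw [hWs ζ hζ, hQev ζ hζ]
        simp only [Polynomial.eval_pow, Polynomial.eval_X, pow_zero, Polynomial.eval_one]
        have hfr : ζ * (ζ - β)⁻¹ = 1 + β * (ζ - β)⁻¹ := by field_simp; ring
        calc w ζ * ζ * (ζ - β)⁻¹ * ζ ^ (d+1) * ((ζ⁻¹) ^ (d+1) * Q.eval ζ)
            = w ζ * Q.eval ζ * (ζ * (ζ - β)⁻¹) * ((ζ * ζ⁻¹) ^ (d+1)) := by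
              rw [mul_pow]
              ring
          _ = w ζ * Q.eval ζ * (1 + β * (ζ - β)⁻¹) := by
              rw [mul_inv_cancel₀ hζ0, one_pow, mul_one, hfr]
          _ = w ζ * Q.eval ζ * 1 + β * (w ζ * Q.eval ζ * (ζ - β)⁻¹) := by ring
      rw [hconv1, hγs, mul_zero, add_zero] at hOR1
      exact hOR1
    obtain ⟨e, he⟩ := exists_rep S.φ S.κ S.degφ S.leadφ S.κ_ne (d+1) Q hQdeg
    have hetop : (T.φb (d+1)).eval 0 = e (d+1) * S.κ (d+1) := by
      have h := rep_coeff_top S.φ S.κ S.degφ S.leadφ he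
      rw [hQtop] at h
      exact h
    have hej : ∀ j, j ≤ d → e j * T.κ (d+1) = (S.φb j).eval 0 := by
      intro j hj
      have h1 : pairw w Q (S.φb j) = e j := rep_pair S hwS he (by omega)
      rw [pair_monomial_expand hwS _ _ (S.degφb j)] at h1
      rw [Finset.sum_eq_single 0 (fun b hb hbne => by
          rw [hνs b (by have := Finset.mem_range.mp hb; omega) (by omega), mul_zero])
        (fun hh => absurd (Finset.mem_range.mpr (by omega)) hh)] at h1
      rw [← h1]
      calc ((S.φb j).coeff 0 * pairw w Q (X ^ 0)) * T.κ (d+1)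
          = (S.φb j).coeff 0 * (pairw w Q (X ^ 0) * T.κ (d+1)) := by ring
        _ = (S.φb j).eval 0 := by rw [hν0, mul_one, Polynomial.coeff_zero_eq_eval_zero]
    have hsum2 : ∑ j ∈ Finset.range (d+2), e j * S.ξ j β = e 0 * (2 / S.κ 0) := by
      rw [Finset.sum_congr rfl (fun j _ => by rw [X0 j, mul_add])]
      rw [Finset.sum_add_distrib]
      have hJ0 : ∑ j ∈ Finset.range (d+2), e j * (2 * β * Jf w β (S.φ j)) = 0 := by
        calc ∑ j ∈ Finset.range (d+2), e j * (2 * β * Jf w β (S.φ j))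
            = (2 * β) * ∑ j ∈ Finset.range (d+2), e j * Jf w β (S.φ j) := by
              rw [Finset.mul_sum]
              exact Finset.sum_congr rfl fun j _ => by ring
          _ = (2 * β) * Jf w β Q := by rw [← Jf_sum hwS hβT, ← he]
          _ = 0 := by rw [hγs, mul_zero]
      rw [hJ0, zero_add]
      rw [Finset.sum_eq_single 0 (fun b hb hbne => by rw [if_neg hbne, mul_zero])
        (fun hh => absurd (Finset.mem_range.mpr (by omega)) hh)]
      rw [if_pos rfl]
    have hstar := star_identity S hwS hβT d
    have hlast : e (d+1) * S.ξ (d+1) β * T.κ (d+1) = S.κ d * S.ξs d β := by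
      have h5 := congrArg (fun x : ℂ => x * T.κ (d+1)) hsum2
      rw [Finset.sum_mul, Finset.sum_range_succ] at h5
      have h6 : ∀ j ∈ Finset.range (d+1), e j * S.ξ j β * T.κ (d+1)
          = (S.φb j).eval 0 * S.ξ j β := by
        intro j hj
        have h7 := hej j (by have := Finset.mem_range.mp hj; omega)
        calc e j * S.ξ j β * T.κ (d+1) = (e j * T.κ (d+1)) * S.ξ j β := by ring
          _ = (S.φb j).eval 0 * S.ξ j β := by rw [h7]
      rw [Finset.sum_congr rfl h6, hstar] at h5
      have h8 : e 0 * (2 / S.κ 0) * T.κ (d+1) = 2 := by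
        have h9 := hej 0 (by omega)
        have h10 : (S.φb 0).eval 0 = S.κ 0 := by
          rw [phib0_eq S]
          simp
        rw [h10] at h9
        have hκ0 := S.κ_ne 0
        calc e 0 * (2 / S.κ 0) * T.κ (d+1) = (e 0 * T.κ (d+1)) * 2 / S.κ 0 := by ring
          _ = S.κ 0 * 2 / S.κ 0 := by rw [h9]
          _ = 2 := by rw [mul_comm, mul_div_assoc, div_self hκ0, mul_one]
      rw [h8] at h5
      linear_combination h5
    have hA : (T.φb (d+1)).eval 0 * S.ξ (d+1) β * T.κ (d+1)
        = S.κ (d+1) * (S.κ d * S.ξs d β) := by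
      rw [hetop]
      linear_combination S.κ (d+1) * hlast
    show (T.φb (d+1)).eval 0 / T.κ (d+1) = S.ξs d β / (β * S.ξ d β)
    rw [div_eq_div_iff (T.κ_ne (d+1)) (mul_ne_zero hβ0 (hξβ d))]
    apply mul_right_cancel₀ (mul_ne_zero (T.κ_ne (d+1)) (hξβ (d+1)))
    linear_combination (β * S.ξ d β) * hA - S.ξs d β * key1


/-- coefficients of the conjugated elementary Geronimus transformation
`w ↦ w/(1 - β* ζ⁻¹)`. -/
theorem elementary_geronimus_conjugate (w : ℂ → ℂ)
    (hw : ContinuousOn w (Metric.sphere (0 : ℂ) 1))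
    (hI : ∀ n, toeplitzDet w n ≠ 0) (S : BOPS w)
    (β : ℂ) (hβT : ‖β‖ ≠ 1) (hβ0 : β ≠ 0)
    (hξβ : ∀ n, S.ξ n β ≠ 0)
    (T : BOPS (fun ζ => w ζ / (1 - β * ζ⁻¹)))
    (n : ℕ) (hn : 1 ≤ n) :
    (T.κ n) ^ 2 = S.κ n * S.κ (n - 1) * β * S.ξ (n - 1) β / S.ξ n β ∧
    T.r n = ((S.φ n).eval 0 * S.ξ (n - 1) β - (S.φ (n - 1)).eval 0 * S.ξ n β)
              / (S.κ n * S.ξ (n - 1) β) ∧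
    T.rb n = S.ξs (n - 1) β / (β * S.ξ (n - 1) β) := by
  obtain ⟨d, rfl⟩ : ∃ d, n = d + 1 := ⟨n - 1, by omega⟩
  simp only [Nat.add_sub_cancel]
  exact egc_main w hw S β hβT hβ0 hξβ T d
end
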